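/- arXiv:2503.14889 — 4 statements merged into one kernel-verified Lean document; each statement's English description precedes it below -/
import Mathlib

section
/- Let d ≥ 1 be an integer and p > 1. Suppose q : (0,∞) → (0,∞) is twice continuously differentiable, solves the ODE q''(r) + ((d−1)/r) q'(r) − q(r) + q(r)^p = 0 for all r > 0, and satisfies q(r) → 0 as r → ∞. Then there exist constants c_q > 0 and C > 0 such that for all r ≥ 1: |q(r) − c_q r^{−(d−1)/2} e^{−r}| + |q'(r) + c_q r^{−(d−1)/2} e^{−r}| ≤ C r^{−(d+1)/2} e^{−r}. -/
noncomputable section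

open Filter Topology
open Set Real

private lemma monoIci {f f' : ℝ → ℝ} {a : ℝ}
    (hf : ∀ r ∈ Set.Ici a, HasDerivAt f (f' r) r)
    (h0 : ∀ r ∈ Set.Ici a, 0 ≤ f' r) : MonotoneOn f (Set.Ici a) := by
  apply monotoneOn_of_deriv_nonneg (convex_Ici a)
    (fun r hr => (hf r hr).continuousAt.continuousWithinAt)
  · intro r hr
    rw [interior_Ici] at hr
    exact (hf r (Set.mem_Ici.mpr (le_of_lt hr))).differentiableAt.differentiableWithinAt
  · intro r hr
    rw [interior_Ici] at hr
    rw [(hf r (Set.mem_Ici.mpr (le_of_lt hr))).deriv]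
    exact h0 r (Set.mem_Ici.mpr (le_of_lt hr))

private lemma antiIci {f f' : ℝ → ℝ} {a : ℝ}
    (hf : ∀ r ∈ Set.Ici a, HasDerivAt f (f' r) r)
    (h0 : ∀ r ∈ Set.Ici a, f' r ≤ 0) : AntitoneOn f (Set.Ici a) := by
  apply antitoneOn_of_deriv_nonpos (convex_Ici a)
    (fun r hr => (hf r hr).continuousAt.continuousWithinAt)
  · intro r hr
    rw [interior_Ici] at hr
    exact (hf r (Set.mem_Ici.mpr (le_of_lt hr))).differentiableAt.differentiableWithinAt
  · intro r hr
    rw [interior_Ici] at hr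
    rw [(hf r (Set.mem_Ici.mpr (le_of_lt hr))).deriv]
    exact h0 r (Set.mem_Ici.mpr (le_of_lt hr))

private lemma strictMonoIcc {f f' : ℝ → ℝ} {a b : ℝ}
    (hf : ∀ r ∈ Set.Icc a b, HasDerivAt f (f' r) r)
    (h0 : ∀ r ∈ Set.Ioo a b, 0 < f' r) : StrictMonoOn f (Set.Icc a b) := by
  apply strictMonoOn_of_deriv_pos (convex_Icc a b)
    (fun r hr => (hf r hr).continuousAt.continuousWithinAt)
  intro r hr
  rw [interior_Icc] at hr
  rw [(hf r (Set.mem_Icc_of_Ioo hr)).deriv]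
  exact h0 r hr


private lemma riccati_upper {y e c : ℝ → ℝ} {S K : ℝ} (hS : 1 ≤ S) (hK : 1 ≤ K)
    (hdy : ∀ r, S ≤ r → HasDerivAt y (e r + c r * y r) r)
    (hc : ∀ r, S ≤ r → 3/2 ≤ c r)
    (hyb : ∀ r, S ≤ r → y r ≤ 1/2)
    (he : ∀ r, S ≤ r → |e r| ≤ K / r^2) :
    ∀ r, S ≤ r → y r ≤ K / r^2 := by
  intro r1 hr1
  by_contra hcon
  push_neg at hcon
  have hrpos : ∀ r : ℝ, S ≤ r → (0:ℝ) < r := fun r hr => lt_of_lt_of_le one_pos (hS.trans hr)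
  have hr1pos : (0:ℝ) < r1 := hrpos r1 hr1
  have hK0 : (0:ℝ) < K := lt_of_lt_of_le one_pos hK
  have hKr : ∀ r : ℝ, S ≤ r → (0:ℝ) < K / r^2 := fun r hr =>
    div_pos hK0 (pow_pos (hrpos r hr) 2)
  have hy1pos : 0 < y r1 := lt_trans (hKr r1 hr1) hcon
  set g : ℝ → ℝ := fun r => y r - K / r^2 with hgdef
  have hdg : ∀ r, S ≤ r → HasDerivAt g
      (e r + c r * y r - K * (-(2 * r^1) / (r^2)^2)) r := by
    intro r hr
    have h2 : HasDerivAt (fun x : ℝ => K / x^2) (K * (-(2 * r^1) / (r^2)^2)) r := by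
      have := ((hasDerivAt_pow 2 r).inv (pow_ne_zero 2 (hrpos r hr).ne')).const_mul K
      simpa [div_eq_mul_inv, Nat.cast_ofNat] using this
    exact (hdy r hr).sub h2
  -- derivative positivity in the invariant region
  have hkey : ∀ r, S ≤ r → K / r^2 ≤ y r →
      0 < e r + c r * y r - K * (-(2 * r^1) / (r^2)^2) := by
    intro r hr hy
    have hrp := hrpos r hr
    have he' := (abs_le.mp (he r hr)).1
    have hcy : (3/2) * y r ≤ c r * y r :=
      mul_le_mul_of_nonneg_right (hc r hr) (le_trans (hKr r hr).le hy)
    have h1 : 0 < K * (2 * r^1) / (r^2)^2 := by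
      apply div_pos (by nlinarith) (by positivity)
    have h2 : 0 < y r := lt_of_lt_of_le (hKr r hr) hy
    have hdiveq : e r + c r * y r - K * (-(2 * r ^ 1) / (r ^ 2) ^ 2)
        = e r + c r * y r + K * (2 * r^1) / (r^2)^2 := by ring
    rw [hdiveq]
    linarith [hKr r hr]
  -- forward invariance: g stays positive
  have hgpos : ∀ r, r1 ≤ r → 0 < g r := by
    by_contra hcon2
    push_neg at hcon2
    obtain ⟨t0, ht0r1, ht0⟩ := hcon2
    have hgc : ContinuousOn g (Set.Ici r1) := fun r hr =>
      ((hdg r (hr1.trans hr)).continuousAt).continuousWithinAt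
    have hseteq : {r | r1 ≤ r ∧ g r ≤ 0} = Set.Ici r1 ∩ g ⁻¹' (Set.Iic 0) := by
      ext x; simp [Set.mem_Ici, Set.mem_Iic, Set.mem_setOf_eq]
    have hclosed : IsClosed {r | r1 ≤ r ∧ g r ≤ 0} := by
      rw [hseteq]
      exact hgc.preimage_isClosed_of_isClosed isClosed_Ici isClosed_Iic
    have hne : {r | r1 ≤ r ∧ g r ≤ 0}.Nonempty := ⟨t0, ht0r1, ht0⟩
    have hbdd : BddBelow {r | r1 ≤ r ∧ g r ≤ 0} := ⟨r1, fun x hx => hx.1⟩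
    set T := sInf {r | r1 ≤ r ∧ g r ≤ 0} with hTdef
    have hTmem : T ∈ {r | r1 ≤ r ∧ g r ≤ 0} := hclosed.csInf_mem hne hbdd
    have hgr1 : 0 < g r1 := sub_pos.mpr hcon
    have hr1T : r1 < T := lt_of_le_of_ne hTmem.1 (by
      intro h; rw [← h] at hTmem; exact absurd hTmem.2 (not_le.mpr hgr1))
    have hmid : ∀ s, r1 ≤ s → s < T → 0 < g s := by
      intro s hs hsT
      by_contra hgs
      push_neg at hgs
      exact absurd (csInf_le hbdd ⟨hs, hgs⟩) (not_le.mpr hsT)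
    have hsm : StrictMonoOn g (Set.Icc r1 T) := by
      apply strictMonoIcc (f' := fun r => e r + c r * y r - K * (-(2 * r^1) / (r^2)^2))
      · exact fun r hr => hdg r (hr1.trans hr.1)
      · intro s hs
        have hsS : S ≤ s := hr1.trans hs.1.le
        have := hmid s hs.1.le hs.2
        exact hkey s hsS (by simpa [hgdef, sub_pos] using this.le)
    have := hsm (Set.left_mem_Icc.mpr hr1T.le) (Set.right_mem_Icc.mpr hr1T.le) hr1T
    exact absurd hTmem.2 (not_le.mpr (lt_trans hgr1 this))
  -- exponential growth
  set h : ℝ → ℝ := fun r => y r * Real.exp (-(r/2)) with hhdef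
  have hdh : ∀ r ∈ Set.Ici r1, HasDerivAt h
      ((e r + c r * y r) * Real.exp (-(r/2)) + y r * (Real.exp (-(r/2)) * -(1/2))) r := by
    intro r hr
    have hE : HasDerivAt (fun x : ℝ => Real.exp (-(x/2))) (Real.exp (-(r/2)) * -(1/2)) r := by
      have : HasDerivAt (fun x : ℝ => -(x/2)) (-(1/2)) r := ((hasDerivAt_id r).div_const 2).neg
      simpa using this.exp
    exact (hdy r (hr1.trans hr)).mul hE
  have hmono : MonotoneOn h (Set.Ici r1) := by
    apply monoIci hdh
    intro r hr
    have hrS : S ≤ r := hr1.trans hr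
    have hrp := hrpos r hrS
    have hgp := hgpos r hr
    have hy : K / r^2 ≤ y r := by
      have : 0 < y r - K / r^2 := hgp
      linarith
    have he' := (abs_le.mp (he r hrS)).1
    have hcy : (3/2) * y r ≤ c r * y r :=
      mul_le_mul_of_nonneg_right (hc r hrS) (le_trans (hKr r hrS).le hy)
    have hEpos : (0:ℝ) < Real.exp (-(r/2)) := Real.exp_pos _
    have hy0 : 0 < y r := lt_of_lt_of_le (hKr r hrS) hy
    have hsum : 0 ≤ e r + c r * y r - y r / 2 := by linarith
    nlinarith [mul_nonneg hEpos.le hsum]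
  have hgrow : ∀ r, r1 ≤ r → y r1 * Real.exp (-(r1/2)) * Real.exp (r/2) ≤ y r := by
    intro r hr
    have := hmono (Set.self_mem_Ici) (Set.mem_Ici.mpr hr) hr
    have hE : Real.exp (-(r/2)) * Real.exp (r/2) = 1 := by
      rw [← Real.exp_add]; norm_num
    have hEpos : (0:ℝ) < Real.exp (r/2) := Real.exp_pos _
    calc y r1 * Real.exp (-(r1/2)) * Real.exp (r/2)
        ≤ y r * Real.exp (-(r/2)) * Real.exp (r/2) := by
          apply mul_le_mul_of_nonneg_right _ hEpos.le
          simpa [hhdef] using this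
      _ = y r := by rw [mul_assoc, hE, mul_one]
  have htend : Tendsto (fun r : ℝ => y r1 * Real.exp (-(r1/2)) * Real.exp (r/2)) atTop atTop := by
    apply Tendsto.const_mul_atTop (mul_pos hy1pos (Real.exp_pos _))
    exact Real.tendsto_exp_atTop.comp (tendsto_id.atTop_div_const two_pos)
  obtain ⟨r, hr⟩ := ((htend.eventually_gt_atTop (1/2)).and (eventually_ge_atTop r1)).exists
  have := hyb r (hr1.trans hr.2)
  have := hgrow r hr.2
  linarith [hr.1]
set_option maxHeartbeats 4000000 in
/-- Asymptotics of the radial profile of the ground state: a positive, twice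
continuously differentiable solution of `q'' + ((d−1)/r) q' − q + q^p = 0` which
tends to `0` at infinity satisfies
`q(r) ≈ c_q r^{−(d−1)/2} e^{−r}` and `q'(r) ≈ −c_q r^{−(d−1)/2} e^{−r}`. -/
theorem statement13
    (d : ℕ) (hd : 1 ≤ d) (p : ℝ) (hp : 1 < p) (q : ℝ → ℝ)
    (hpos : ∀ r : ℝ, 0 < r → 0 < q r)
    (hreg : ContDiffOn ℝ 2 q (Set.Ioi 0))
    (hode : ∀ r : ℝ, 0 < r →
      deriv (deriv q) r + (((d : ℝ) - 1) / r) * deriv q r - q r + q r ^ p = 0)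
    (hlim : Tendsto q atTop (𝓝 0)) :
    ∃ cq > (0 : ℝ), ∃ C > (0 : ℝ), ∀ r : ℝ, 1 ≤ r →
      |q r - cq * r ^ (-(((d : ℝ) - 1) / 2)) * Real.exp (-r)|
        + |deriv q r + cq * r ^ (-(((d : ℝ) - 1) / 2)) * Real.exp (-r)|
        ≤ C * r ^ (-(((d : ℝ) + 1) / 2)) * Real.exp (-r) := by
  have hd1 : (1:ℝ) ≤ (d:ℝ) := by exact_mod_cast hd
  set ν : ℝ := ((d : ℝ) - 1) / 2 with hνdef
  have hν : 0 ≤ ν := by rw [hνdef]; linarith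
  set w : ℝ → ℝ := fun r => r ^ ν * q r with hwdef
  set w1 : ℝ → ℝ := fun r => ν * r ^ (ν - 1) * q r + r ^ ν * deriv q r with hw1def
  set eps : ℝ → ℝ := fun r => ν * (ν - 1) / r ^ 2 - q r ^ (p - 1) with hepsdef
  set w2 : ℝ → ℝ := fun r => (1 + eps r) * w r with hw2def
  clear_value ν w w1 eps w2
  have hwpos : ∀ r : ℝ, 0 < r → 0 < w r := by
    intro r hr
    simp only [hwdef]
    exact mul_pos (Real.rpow_pos_of_pos hr ν) (hpos r hr)
  have hq1 : ∀ r : ℝ, 0 < r → HasDerivAt q (deriv q r) r := by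
    intro r hr
    exact ((hreg.differentiableOn (by norm_num)).differentiableAt
      (isOpen_Ioi.mem_nhds hr)).hasDerivAt
  have hq2 : ∀ r : ℝ, 0 < r → HasDerivAt (deriv q) (deriv (deriv q) r) r := by
    intro r hr
    have h1 : ContDiffOn ℝ 1 (deriv q) (Set.Ioi 0) :=
      hreg.deriv_of_isOpen isOpen_Ioi (by norm_num)
    exact ((h1.differentiableOn (by norm_num)).differentiableAt
      (isOpen_Ioi.mem_nhds hr)).hasDerivAt
  have hdw : ∀ r : ℝ, 0 < r → HasDerivAt w (w1 r) r := by
    intro r hr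
    have h1 : HasDerivAt (fun x : ℝ => x ^ ν) (ν * r ^ (ν - 1)) r := by
      simpa using Real.hasDerivAt_rpow_const (p := ν) (Or.inl hr.ne')
    rw [hwdef, hw1def]
    exact h1.mul (hq1 r hr)
  have hdw1 : ∀ r : ℝ, 0 < r → HasDerivAt w1 (w2 r) r := by
    intro r hr
    have hrne : r ≠ 0 := hr.ne'
    have hqr := hpos r hr
    have h1 : HasDerivAt (fun x : ℝ => x ^ (ν-1)) ((ν-1) * r ^ (ν-1-1)) r :=
      Real.hasDerivAt_rpow_const (Or.inl hrne)
    have h3 : HasDerivAt (fun x : ℝ => ν * x ^ (ν-1) * q x)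
        (ν * ((ν-1) * r ^ (ν-1-1)) * q r + ν * r ^ (ν-1) * deriv q r) r := by
      have h2 := (h1.const_mul ν).mul (hq1 r hr)
      exact h2
    have h4 : HasDerivAt (fun x : ℝ => x ^ ν) (ν * r ^ (ν - 1)) r := by
      simpa using Real.hasDerivAt_rpow_const (p := ν) (Or.inl hrne)
    have h5 : HasDerivAt (fun x : ℝ => x ^ ν * deriv q x)
        (ν * r ^ (ν-1) * deriv q r + r ^ ν * deriv (deriv q) r) r := h4.mul (hq2 r hr)
    have h6 := h3.add h5
    have hdn : ((d:ℝ) - 1) = 2 * ν := by rw [hνdef]; ring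
    have hqq : deriv (deriv q) r = q r - q r ^ p - 2*ν/r * deriv q r := by
      have h0 := hode r hr
      rw [hdn] at h0
      linarith
    have ha' : r ^ (ν-1-1) = r ^ ν / r / r := by
      rw [Real.rpow_sub hr, Real.rpow_sub hr, Real.rpow_one]
    have hb' : r ^ (ν-1) = r ^ ν / r := by
      rw [Real.rpow_sub hr, Real.rpow_one]
    have hc' : q r ^ p = q r ^ (p-1) * q r := by
      conv_lhs => rw [show p = p - 1 + 1 by ring]
      rw [Real.rpow_add_one hqr.ne']
    have heq : ν * ((ν-1) * r ^ (ν-1-1)) * q r + ν * r ^ (ν-1) * deriv q r +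
        (ν * r ^ (ν-1) * deriv q r + r ^ ν * deriv (deriv q) r) = w2 r := by
      simp only [hw2def, hwdef, hepsdef]
      rw [hqq, ha', hb', hc']
      field_simp
      ring
    rw [hw1def, ← heq]
    exact h6
  -- Step A : |eps| ≤ 3/4 for r ≥ R
  obtain ⟨R, hR1, hRe⟩ : ∃ R : ℝ, 1 ≤ R ∧ ∀ r : ℝ, R ≤ r → |eps r| ≤ 3/4 := by
    have htend0 : Tendsto (fun r : ℝ => ν*(ν-1)/r^2) atTop (𝓝 0) :=
      tendsto_const_nhds.div_atTop (tendsto_pow_atTop (by norm_num))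
    have h1 : ∀ᶠ r : ℝ in atTop, |ν*(ν-1)/r^2| < 1/4 := by
      have h := Metric.tendsto_nhds.mp htend0 (1/4) (by norm_num)
      filter_upwards [h] with r hr
      rw [Real.dist_eq, sub_zero] at hr
      exact hr
    have hp1 : p - 1 ≠ 0 := sub_ne_zero.mpr hp.ne'
    set η : ℝ := (2:ℝ)⁻¹ ^ (p-1)⁻¹ with hηdef
    have hη : 0 < η := Real.rpow_pos_of_pos (by norm_num) _
    have h2 : ∀ᶠ r : ℝ in atTop, |q r - 0| < η := by
      have h := Metric.tendsto_nhds.mp hlim η hη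
      filter_upwards [h] with r hr
      rw [Real.dist_eq] at hr
      exact hr
    obtain ⟨R0, hR0⟩ := eventually_atTop.mp ((h1.and h2).and (eventually_ge_atTop 1))
    refine ⟨max R0 1, le_max_right _ _, ?_⟩
    intro r hr
    obtain ⟨⟨hr1, hr2⟩, hr3⟩ := hR0 r ((le_max_left _ _).trans hr)
    have hrpos : (0:ℝ) < r := lt_of_lt_of_le one_pos hr3
    have hq0 : 0 < q r := hpos r hrpos
    have hqη : q r ≤ η := by
      rw [sub_zero] at hr2; exact (le_abs_self _).trans hr2.le
    have hqp : q r ^ (p-1) ≤ 1/2 := by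
      calc q r ^ (p-1) ≤ η ^ (p-1) := Real.rpow_le_rpow hq0.le hqη (by linarith)
        _ = 2⁻¹ := Real.rpow_inv_rpow (by norm_num) hp1
        _ = 1/2 := by norm_num
    have hqpn : 0 ≤ q r ^ (p-1) := Real.rpow_nonneg hq0.le _
    simp only [hepsdef]
    calc |ν*(ν-1)/r^2 - q r ^ (p-1)| ≤ |ν*(ν-1)/r^2| + |q r ^ (p-1)| := abs_sub _ _
      _ ≤ 1/4 + 1/2 :=
          add_le_add hr1.le (by rw [abs_of_nonneg hqpn]; exact hqp)
      _ = 3/4 := by norm_num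
  have hRpos : ∀ r : ℝ, R ≤ r → (0:ℝ) < r := fun r hr => lt_of_lt_of_le one_pos (hR1.trans hr)
  -- Step B : w1 < 0 on [R, ∞)
  have hw2pos : ∀ r : ℝ, R ≤ r → 0 < w2 r := by
    intro r hr
    have hepsb := (abs_le.mp (hRe r hr)).1
    have hwp := hwpos r (hRpos r hr)
    simp only [hw2def]
    have h1 : (0:ℝ) < 1 + eps r := by linarith
    exact mul_pos h1 hwp
  have hw1neg : ∀ r : ℝ, R ≤ r → w1 r < 0 := by
    by_contra hcon
    push_neg at hcon
    obtain ⟨r1, hr1R, hr1⟩ := hcon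
    have hr1pos : (0:ℝ) < r1 := hRpos r1 hr1R
    have hsm : StrictMonoOn w1 (Set.Ici R) := by
      apply strictMonoOn_of_deriv_pos (convex_Ici R)
        (fun r hr => (hdw1 r (hRpos r hr)).continuousAt.continuousWithinAt)
      intro r hr
      rw [interior_Ici] at hr
      rw [(hdw1 r (hRpos r hr.le)).deriv]
      exact hw2pos r hr.le
    have hc0 : 0 < w1 (r1+1) := by
      have h9 := hsm (Set.mem_Ici.mpr hr1R) (Set.mem_Ici.mpr (show R ≤ r1+1 by linarith))
        (show r1 < r1+1 by linarith)
      linarith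
    set c0 := w1 (r1+1) with hc0def
    clear_value c0
    have hw1ge : ∀ r : ℝ, r1 + 1 ≤ r → c0 ≤ w1 r := by
      intro r hr
      rw [hc0def]
      exact hsm.monotoneOn (Set.mem_Ici.mpr (show R ≤ r1+1 by linarith))
        (Set.mem_Ici.mpr (show R ≤ r by linarith)) hr
    have hposr : ∀ r : ℝ, r1 + 1 ≤ r → (0:ℝ) < r := fun r hr => by linarith
    have hRr : ∀ r : ℝ, r1 + 1 ≤ r → R ≤ r := fun r hr => by linarith
    have hwgrow : ∀ r : ℝ, r1 + 1 ≤ r → w (r1+1) + c0 * (r - (r1+1)) ≤ w r := by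
      intro r hr
      have hmono2 : MonotoneOn (fun s => w s - c0 * s) (Set.Ici (r1+1)) := by
        apply monoIci (f' := fun s => w1 s - c0)
        · intro s hs
          exact ((hdw s (hposr s hs)).sub
            (((hasDerivAt_id s).const_mul c0))).congr_deriv (by ring)
        · intro s hs
          have h9 := hw1ge s hs
          show (0:ℝ) ≤ w1 s - c0
          linarith
      have h9 : w (r1+1) - c0*(r1+1) ≤ w r - c0*r :=
        hmono2 Set.self_mem_Ici (Set.mem_Ici.mpr hr) hr
      linarith
    have hwmono : MonotoneOn w (Set.Ici (r1+1)) := by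
      apply monoIci (f' := w1) (fun s hs => hdw s (hposr s hs))
      intro s hs
      linarith [hw1ge s hs]
    set E : ℝ → ℝ := fun r => w1 r * w1 r - w r * w r / 4 with hEdef
    clear_value E
    have hdE : ∀ r ∈ Set.Ici (r1+1), HasDerivAt E
        (w2 r * w1 r + w1 r * w2 r - (w1 r * w r + w r * w1 r)/4) r := by
      intro r hr
      have hrp := hposr r hr
      rw [hEdef]
      exact ((hdw1 r hrp).mul (hdw1 r hrp)).sub (((hdw r hrp).mul (hdw r hrp)).div_const 4)
    have hEmono : MonotoneOn E (Set.Ici (r1+1)) := by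
      apply monoIci hdE
      intro r hr
      have hrR : R ≤ r := hRr r hr
      have h1 := hw1ge r hr
      have h2 := hwpos r (hRpos r hrR)
      have hepsb := (abs_le.mp (hRe r hrR)).1
      simp only [hw2def]
      have hkey : 0 ≤ (w1 r * w r) * (3/2 + 2 * eps r) :=
        mul_nonneg (mul_nonneg (le_of_lt (lt_of_lt_of_le hc0 h1)) h2.le) (by linarith)
      nlinarith [hkey]
    set E0 := E (r1+1) with hE0def
    clear_value E0
    set m0 := Real.sqrt (8 * |E0|) with hm0def
    have hm0nn : 0 ≤ m0 := Real.sqrt_nonneg _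
    clear_value m0
    set r2 := r1 + 1 + m0 / c0 with hr2def
    clear_value r2
    have hr2ge : r1 + 1 ≤ r2 := by
      have h9 : 0 ≤ m0 / c0 := div_nonneg hm0nn hc0.le
      rw [hr2def]
      linarith
    have hwr2 : m0 ≤ w r2 := by
      have hg := hwgrow r2 hr2ge
      have hw0 : 0 < w (r1+1) := hwpos _ (hposr _ le_rfl)
      have hceq : c0 * (r2 - (r1+1)) = m0 := by
        rw [hr2def]
        have h8 : r1 + 1 + m0 / c0 - (r1+1) = m0 / c0 := by ring
        rw [h8, mul_div_cancel₀ _ hc0.ne']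
      linarith
    have hwge : ∀ r : ℝ, r2 ≤ r → m0 ≤ w r := fun r hr =>
      hwr2.trans (hwmono (Set.mem_Ici.mpr hr2ge) (Set.mem_Ici.mpr (hr2ge.trans hr)) hr)
    have hw13 : ∀ r : ℝ, r2 ≤ r → w r / 3 ≤ w1 r := by
      intro r hr
      have hr12 : r1 + 1 ≤ r := hr2ge.trans hr
      have hrR : R ≤ r := hRr r hr12
      have hE := hEmono Set.self_mem_Ici (Set.mem_Ici.mpr hr12) hr12
      have hsq : 8 * |E0| ≤ w r * w r := by
        have h := hwge r hr
        have hmm : m0 * m0 = 8 * |E0| := by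
          rw [hm0def]
          exact Real.mul_self_sqrt (by positivity)
        nlinarith [hmm, h, hm0nn]
      have h1 := hw1ge r hr12
      have h2 := hwpos r (hRpos r hrR)
      have h3 : 0 < w1 r := lt_of_lt_of_le hc0 h1
      have habs : -|E0| ≤ E0 := neg_abs_le _
      rw [← hE0def] at hE
      simp only [hEdef] at hE
      nlinarith [hE, habs, hsq, mul_pos h2 h3, sq_nonneg (w r - 3*w1 r), sq_nonneg (w r + 3*w1 r)]
    have hwexp : ∀ r : ℝ, r2 ≤ r → w r2 * Real.exp (-(r2/3)) * Real.exp (r/3) ≤ w r := by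
      have hdh : ∀ r ∈ Set.Ici r2, HasDerivAt (fun s => w s * Real.exp (-(s/3)))
          (w1 r * Real.exp (-(r/3)) + w r * (Real.exp (-(r/3)) * -(1/3))) r := by
        intro r hr
        have hrp : (0:ℝ) < r := hposr r (hr2ge.trans hr)
        have hE2 : HasDerivAt (fun x : ℝ => Real.exp (-(x/3))) (Real.exp (-(r/3)) * -(1/3)) r := by
          have h := ((hasDerivAt_id r).div_const 3).neg
          simpa using h.exp
        exact (hdw r hrp).mul hE2
      have hmono : MonotoneOn (fun s => w s * Real.exp (-(s/3))) (Set.Ici r2) := by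
        apply monoIci hdh
        intro r hr
        have h13 := hw13 r hr
        have hEp : (0:ℝ) < Real.exp (-(r/3)) := Real.exp_pos _
        nlinarith [mul_nonneg (show (0:ℝ) ≤ w1 r - w r/3 by linarith) hEp.le]
      intro r hr
      have h : w r2 * Real.exp (-(r2/3)) ≤ w r * Real.exp (-(r/3)) :=
        hmono Set.self_mem_Ici (Set.mem_Ici.mpr hr) hr
      have hEpos : (0:ℝ) < Real.exp (r/3) := Real.exp_pos _
      have hE1 : Real.exp (-(r/3)) * Real.exp (r/3) = 1 := by
        rw [← Real.exp_add]; norm_num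
      calc w r2 * Real.exp (-(r2/3)) * Real.exp (r/3)
          ≤ w r * Real.exp (-(r/3)) * Real.exp (r/3) :=
            mul_le_mul_of_nonneg_right h hEpos.le
        _ = w r := by rw [mul_assoc, hE1, mul_one]
    have hα : 0 < w r2 * Real.exp (-(r2/3)) :=
      mul_pos (hwpos r2 (hposr r2 hr2ge)) (Real.exp_pos _)
    have hqlow : ∀ r : ℝ, max r2 1 ≤ r →
        w r2 * Real.exp (-(r2/3)) * Real.exp (r/3) / r^d ≤ q r := by
      intro r hr
      have hr1' : (1:ℝ) ≤ r := le_trans (le_max_right _ _) hr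
      have hrp : (0:ℝ) < r := by linarith
      have hrd : r ^ ν ≤ r ^ (d:ℕ) := by
        calc r ^ ν ≤ r ^ ((d:ℕ):ℝ) :=
              Real.rpow_le_rpow_of_exponent_le hr1' (by rw [hνdef]; push_cast; linarith)
          _ = r ^ (d:ℕ) := Real.rpow_natCast r d
      have hwr := hwexp r (le_trans (le_max_left _ _) hr)
      have hq : q r = w r / r ^ ν := by
        rw [hwdef]
        field_simp
      rw [hq]
      exact div_le_div₀ (hwpos r hrp).le hwr (Real.rpow_pos_of_pos hrp ν) hrd
    have htend : Tendsto (fun r : ℝ => w r2 * Real.exp (-(r2/3)) * Real.exp (r/3) / r^d)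
        atTop atTop := by
      have h1 : Tendsto (fun r : ℝ => Real.exp (r/3) / (r/3)^d) atTop atTop :=
        (Real.tendsto_exp_div_pow_atTop d).comp (tendsto_id.atTop_div_const (by norm_num))
      have h2 : Tendsto (fun r : ℝ => Real.exp (r/3) / (r/3)^d / (3:ℝ)^d) atTop atTop :=
        h1.atTop_div_const (by positivity)
      have h3 := h2.const_mul_atTop hα
      apply Tendsto.congr' _ h3
      filter_upwards [eventually_gt_atTop 0] with r hr
      rw [div_pow]
      have h30 : ((3:ℝ))^d ≠ 0 := by positivity
      have hr0 : r^d ≠ 0 := pow_ne_zero _ hr.ne'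
      field_simp
    have hqsmall : ∀ᶠ r : ℝ in atTop, q r < 1 := hlim.eventually_lt_const one_pos
    obtain ⟨r, hrc⟩ := (((htend.eventually_gt_atTop 1).and hqsmall).and
      (eventually_ge_atTop (max r2 1))).exists
    have := hqlow r hrc.2
    linarith [hrc.1.1, hrc.1.2]
  -- Step C : energy bounds
  have hdE2 : ∀ r ∈ Set.Ici R, HasDerivAt (fun s => w1 s * w1 s - w s * w s / 4)
      (w2 r * w1 r + w1 r * w2 r - (w1 r * w r + w r * w1 r)/4) r := by
    intro r hr
    have hrp := hRpos r hr
    exact ((hdw1 r hrp).mul (hdw1 r hrp)).sub (((hdw r hrp).mul (hdw r hrp)).div_const 4)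
  have hEanti : AntitoneOn (fun s => w1 s * w1 s - w s * w s / 4) (Set.Ici R) := by
    apply antiIci hdE2
    intro r hr
    have h1 := hw1neg r hr
    have h2 := hwpos r (hRpos r hr)
    have hepsb := (abs_le.mp (hRe r hr)).1
    have hw2e : w2 r = (1 + eps r) * w r := by rw [hw2def]
    have hw1w : w1 r * w r ≤ 0 := by nlinarith [mul_pos (neg_pos.mpr h1) h2]
    have hkey : (w1 r * w r) * (3/2 + 2 * eps r) ≤ 0 := by
      nlinarith [hw1w, (show (0:ℝ) ≤ 3/2 + 2*eps r by linarith)]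
    rw [hw2e]
    nlinarith [hkey]
  have hEnn : ∀ r0 : ℝ, R ≤ r0 → 0 ≤ w1 r0 * w1 r0 - w r0 * w r0 / 4 := by
    intro r0 hr0
    by_contra hneg
    push_neg at hneg
    set m2 := -(w1 r0 * w1 r0 - w r0 * w r0 / 4) with hm2def
    have hm2pos : 0 < m2 := by rw [hm2def]; linarith
    clear_value m2
    set m := Real.sqrt (4 * m2) with hmdef
    have hmpos : 0 < m := by rw [hmdef]; exact Real.sqrt_pos.mpr (by linarith)
    have hmm : m * m = 4 * m2 := by rw [hmdef]; exact Real.mul_self_sqrt (by linarith)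
    clear_value m
    have hwm : ∀ s : ℝ, r0 ≤ s → m ≤ w s := by
      intro s hs
      have hsR : R ≤ s := le_trans hr0 hs
      have hE : w1 s * w1 s - w s * w s / 4 ≤ w1 r0 * w1 r0 - w r0 * w r0 / 4 :=
        hEanti (Set.mem_Ici.mpr hr0) (Set.mem_Ici.mpr hsR) hs
      have h2 := hwpos s (hRpos s hsR)
      nlinarith [hE, hmm, sq_nonneg (w1 s), hm2pos, h2, hmpos, hm2def]
    have hmono3 : MonotoneOn (fun s => w1 s - (m/4)*s) (Set.Ici r0) := by
      apply monoIci (f' := fun s => w2 s - m/4)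
      · intro s hs
        exact ((hdw1 s (hRpos s (le_trans hr0 hs))).sub
          (((hasDerivAt_id s).const_mul (m/4)))).congr_deriv (by ring)
      · intro s hs
        have hsR : R ≤ s := le_trans hr0 hs
        have hepsb := (abs_le.mp (hRe s hsR)).1
        have h2 := hwpos s (hRpos s hsR)
        have h4 := hwm s hs
        show (0:ℝ) ≤ w2 s - m/4
        have hw2e : w2 s = (1 + eps s) * w s := by rw [hw2def]
        rw [hw2e]
        nlinarith [mul_nonneg (show (0:ℝ) ≤ 1 + eps s - 1/4 by linarith) h2.le]
    set s1 := r0 + (4/m) * (1 + |w1 r0|) with hs1def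
    have hs1 : r0 ≤ s1 := by
      rw [hs1def]
      have h8 : 0 ≤ (4/m)*(1 + |w1 r0|) := by positivity
      linarith
    clear_value s1
    have h5 : w1 r0 - (m/4)*r0 ≤ w1 s1 - (m/4)*s1 :=
      hmono3 Set.self_mem_Ici (Set.mem_Ici.mpr hs1) hs1
    have h6 : w1 s1 < 0 := hw1neg s1 (le_trans hr0 hs1)
    have h7 : (m/4) * (s1 - r0) = 1 + |w1 r0| := by
      rw [hs1def]
      field_simp
      ring
    have h8 := neg_abs_le (w1 r0)
    nlinarith [h5, h6, h7, h8]
  have hub : ∀ r : ℝ, R ≤ r → w1 r ≤ -(1/2) * w r := by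
    intro r hr
    have h0 := hEnn r hr
    have h1 := hw1neg r hr
    have h2 := hwpos r (hRpos r hr)
    nlinarith [h0, mul_pos (neg_pos.mpr h1) h2, h2, h1]
  have hdE3 : ∀ r ∈ Set.Ici R, HasDerivAt (fun s => w1 s * w1 s - 7/4 * (w s * w s))
      (w2 r * w1 r + w1 r * w2 r - 7/4 * (w1 r * w r + w r * w1 r)) r := by
    intro r hr
    have hrp := hRpos r hr
    exact ((hdw1 r hrp).mul (hdw1 r hrp)).sub (((hdw r hrp).mul (hdw r hrp)).const_mul (7/4))
  have hEmono3 : MonotoneOn (fun s => w1 s * w1 s - 7/4 * (w s * w s)) (Set.Ici R) := by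
    apply monoIci hdE3
    intro r hr
    have h1 := hw1neg r hr
    have h2 := hwpos r (hRpos r hr)
    have hepsb := (abs_le.mp (hRe r hr)).2
    have hw2e : w2 r = (1 + eps r) * w r := by rw [hw2def]
    have hw1w : w1 r * w r ≤ 0 := by nlinarith [mul_pos (neg_pos.mpr h1) h2]
    have hkey : 0 ≤ (w1 r * w r) * (2 * eps r - 3/2) := by
      nlinarith [mul_nonneg (neg_nonneg.mpr hw1w) (show (0:ℝ) ≤ 3/2 - 2*eps r by linarith)]
    rw [hw2e]
    nlinarith [hkey]
  have hEnp : ∀ r0 : ℝ, R ≤ r0 → w1 r0 * w1 r0 - 7/4 * (w r0 * w r0) ≤ 0 := by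
    intro r0 hr0
    by_contra hneg
    push_neg at hneg
    set b2 := w1 r0 * w1 r0 - 7/4 * (w r0 * w r0) with hb2def
    have hb2pos : 0 < b2 := hneg
    clear_value b2
    set b := Real.sqrt b2 with hbdef
    have hbpos : 0 < b := by rw [hbdef]; exact Real.sqrt_pos.mpr hb2pos
    have hbb : b * b = b2 := by rw [hbdef]; exact Real.mul_self_sqrt hb2pos.le
    clear_value b
    have hw1b : ∀ s : ℝ, r0 ≤ s → w1 s ≤ -b := by
      intro s hs
      have hsR : R ≤ s := le_trans hr0 hs
      have hE : w1 r0 * w1 r0 - 7/4 * (w r0 * w r0) ≤ w1 s * w1 s - 7/4 * (w s * w s) :=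
        hEmono3 (Set.mem_Ici.mpr hr0) (Set.mem_Ici.mpr hsR) hs
      have h1 := hw1neg s hsR
      have h2 := hwpos s (hRpos s hsR)
      nlinarith [hE, hbb, hb2def, sq_nonneg (w s), sq_nonneg (w1 s + b), sq_nonneg (w1 s - b)]
    have hanti4 : AntitoneOn (fun s => w s + b*s) (Set.Ici r0) := by
      apply antiIci (f' := fun s => w1 s + b)
      · intro s hs
        exact ((hdw s (hRpos s (le_trans hr0 hs))).add
          (((hasDerivAt_id s).const_mul b))).congr_deriv (by ring)
      · intro s hs
        have := hw1b s hs
        show w1 s + b ≤ 0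
        linarith
    set s1 := r0 + (w r0 + 1)/b with hs1def
    have hs1 : r0 ≤ s1 := by
      rw [hs1def]
      have h8 : 0 ≤ (w r0 + 1)/b := by
        apply div_nonneg _ hbpos.le
        linarith [hwpos r0 (hRpos r0 hr0)]
      linarith
    clear_value s1
    have h5 : w s1 + b*s1 ≤ w r0 + b*r0 :=
      hanti4 Set.self_mem_Ici (Set.mem_Ici.mpr hs1) hs1
    have h6 : 0 < w s1 := hwpos s1 (hRpos s1 (le_trans hr0 hs1))
    have h7 : b * (s1 - r0) = w r0 + 1 := by
      rw [hs1def]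
      field_simp
      ring
    nlinarith [h5, h6, h7]
  have hlb : ∀ r : ℝ, R ≤ r → -(3/2) * w r ≤ w1 r := by
    intro r hr
    have h0 := hEnp r hr
    have h1 := hw1neg r hr
    have h2 := hwpos r (hRpos r hr)
    nlinarith [h0, mul_pos (neg_pos.mpr h1) h2, h2, h1]
  -- Step D : quantitative smallness of eps
  set K : ℝ := |ν * (ν - 1)| + 1 with hKdef
  have hK1 : (1:ℝ) ≤ K := by rw [hKdef]; linarith [abs_nonneg (ν * (ν - 1))]
  clear_value K
  obtain ⟨S, hSR, hSK, hSe⟩ : ∃ S : ℝ, R ≤ S ∧ K ≤ S ∧ ∀ r : ℝ, S ≤ r → |eps r| ≤ K / r ^ 2 := by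
    have hdecay : ∀ r : ℝ, R ≤ r → w r ≤ (w R * Real.exp (R/2)) * Real.exp (-(r/2)) := by
      have hanti : AntitoneOn (fun s => w s * Real.exp (s/2)) (Set.Ici R) := by
        apply antiIci (f' := fun s => w1 s * Real.exp (s/2) + w s * (Real.exp (s/2) * (1/2)))
        · intro s hs
          have hE2 : HasDerivAt (fun x : ℝ => Real.exp (x/2)) (Real.exp (s/2) * (1/2)) s := by
            have h := (hasDerivAt_id s).div_const 2
            simpa using h.exp
          exact (hdw s (hRpos s hs)).mul hE2
        · intro s hs
          have h1 := hub s hs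
          have h2 := hwpos s (hRpos s hs)
          have hEp : (0:ℝ) < Real.exp (s/2) := Real.exp_pos _
          nlinarith [mul_nonneg (show (0:ℝ) ≤ -(w1 s) - w s/2 by linarith) hEp.le]
      intro r hr
      have h : w r * Real.exp (r/2) ≤ w R * Real.exp (R/2) :=
        hanti Set.self_mem_Ici (Set.mem_Ici.mpr hr) hr
      have hEe : Real.exp (r/2) * Real.exp (-(r/2)) = 1 := by
        rw [← Real.exp_add]; norm_num
      calc w r = w r * Real.exp (r/2) * Real.exp (-(r/2)) := by
            rw [mul_assoc, hEe, mul_one]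
        _ ≤ (w R * Real.exp (R/2)) * Real.exp (-(r/2)) :=
            mul_le_mul_of_nonneg_right h (Real.exp_pos _).le
    set C0 := w R * Real.exp (R/2) with hC0def
    have hC0pos : 0 < C0 := mul_pos (hwpos R (hRpos R le_rfl)) (Real.exp_pos _)
    clear_value C0
    have hqdecay : ∀ r : ℝ, R ≤ r → q r ≤ C0 * Real.exp (-(r/2)) := by
      intro r hr
      have hrp := hRpos r hr
      have hr1' : (1:ℝ) ≤ r := hR1.trans hr
      have hrν : (1:ℝ) ≤ r ^ ν := by
        have h9 := Real.rpow_le_rpow_of_exponent_le hr1' hν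
        rwa [Real.rpow_zero] at h9
      have hw' : q r ≤ w r := by
        have h9 : w r = r ^ ν * q r := by rw [hwdef]
        nlinarith [hpos r hrp, hrν, h9]
      exact hw'.trans (hdecay r hr)
    have hc2 : (0:ℝ) < (p-1)/2 := by linarith
    have hcomp : Tendsto (fun r : ℝ => ((p-1)/2*r)^2 * Real.exp (-((p-1)/2*r))) atTop (𝓝 0) :=
      (tendsto_pow_mul_exp_neg_atTop_nhds_zero 2).comp (Tendsto.const_mul_atTop hc2 tendsto_id)
    have htend2 : Tendsto (fun r : ℝ => r^2 * (C0 ^ (p-1) * Real.exp (-((p-1)/2*r))))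
        atTop (𝓝 0) := by
      have h4 := hcomp.const_mul (C0^(p-1) * (2/(p-1))^2)
      rw [mul_zero] at h4
      apply Tendsto.congr' _ h4
      filter_upwards [] with r
      have hpne : p - 1 ≠ 0 := by linarith
      field_simp
    have hev : ∀ᶠ r : ℝ in atTop, r^2 * (C0 ^ (p-1) * Real.exp (-((p-1)/2*r))) < 1 :=
      htend2.eventually_lt_const one_pos
    obtain ⟨S0, hS0⟩ := eventually_atTop.mp hev
    refine ⟨max (max R K) S0, le_trans (le_max_left R K) (le_max_left _ _),
      le_trans (le_max_right R K) (le_max_left _ _), ?_⟩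
    intro r hr
    have hrR : R ≤ r := le_trans (le_trans (le_max_left R K) (le_max_left _ _)) hr
    have hrp := hRpos r hrR
    have hq0 := hpos r hrp
    have h1 : q r ^ (p-1) ≤ C0 ^ (p-1) * Real.exp (-((p-1)/2*r)) := by
      have h2 : q r ^ (p-1) ≤ (C0 * Real.exp (-(r/2))) ^ (p-1) :=
        Real.rpow_le_rpow hq0.le (hqdecay r hrR) (by linarith)
      have h3 : (C0 * Real.exp (-(r/2))) ^ (p-1)
          = C0^(p-1) * Real.exp (-(r/2)) ^ (p-1) :=
        Real.mul_rpow hC0pos.le (Real.exp_pos _).le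
      have h4 : Real.exp (-(r/2)) ^ (p-1) = Real.exp (-((p-1)/2*r)) := by
        rw [Real.rpow_def_of_pos (Real.exp_pos _), Real.log_exp]
        congr 1
        ring
      rw [h3, h4] at h2
      exact h2
    have h5 : q r ^ (p-1) ≤ 1 / r^2 := by
      have h6 := hS0 r (le_trans (le_max_right _ _) hr)
      have h7 : C0 ^ (p-1) * Real.exp (-((p-1)/2*r)) < 1/r^2 := by
        rw [lt_div_iff₀ (by positivity : (0:ℝ) < r^2)]
        nlinarith [h6]
      linarith
    have hqpn : 0 ≤ q r ^ (p-1) := Real.rpow_nonneg hq0.le _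
    simp only [hepsdef]
    rw [hKdef]
    have habs : |ν*(ν-1)/r^2 - q r ^ (p-1)| ≤ |ν*(ν-1)/r^2| + |q r ^ (p-1)| := abs_sub _ _
    have habs2 : |ν*(ν-1)/r^2| = |ν*(ν-1)|/r^2 := by
      rw [abs_div, abs_of_pos (by positivity : (0:ℝ) < r^2)]
    have habs3 : |q r ^ (p-1)| = q r ^ (p-1) := abs_of_nonneg hqpn
    rw [habs2, habs3] at habs
    rw [add_div]
    linarith
  have hS1 : (1:ℝ) ≤ S := hR1.trans hSR
  have hSpos : ∀ r : ℝ, S ≤ r → (0:ℝ) < r := fun r hr => lt_of_lt_of_le one_pos (hS1.trans hr)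
  -- Step E : Riccati bound |z| ≤ K/r²
  set z : ℝ → ℝ := fun r => 1 + w1 r / w r with hzdef
  clear_value z
  have hdz : ∀ r : ℝ, 0 < r → HasDerivAt z (eps r + (2 - z r) * z r) r := by
    intro r hr
    have hwne : w r ≠ 0 := (hwpos r hr).ne'
    have hdiv : HasDerivAt (fun s => w1 s / w s)
        ((w2 r * w r - w1 r * w1 r) / (w r)^2) r := (hdw1 r hr).div (hdw r hr) hwne
    have h0 : HasDerivAt z ((w2 r * w r - w1 r * w1 r) / (w r)^2) r := by
      rw [hzdef]
      exact hdiv.const_add 1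
    apply h0.congr_deriv
    have hz9 : z r = 1 + w1 r / w r := by rw [hzdef]
    have hw2r : w2 r = (1 + eps r) * w r := by rw [hw2def]
    rw [hz9, hw2r]
    field_simp
    ring
  have hzb : ∀ r : ℝ, R ≤ r → -(1/2) ≤ z r ∧ z r ≤ 1/2 := by
    intro r hr
    have hwp := hwpos r (hRpos r hr)
    have h1 := hub r hr
    have h2 := hlb r hr
    constructor
    · have h9 : -(3/2) ≤ w1 r / w r := by
        rw [le_div_iff₀ hwp]; linarith
      simp only [hzdef]
      linarith
    · have h9 : w1 r / w r ≤ -(1/2) := by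
        rw [div_le_iff₀ hwp]; linarith
      simp only [hzdef]
      linarith
  have hz2 : ∀ r : ℝ, S ≤ r → |z r| ≤ K / r ^ 2 := by
    intro r hr
    rw [abs_le]
    constructor
    · have := riccati_upper (y := fun r => -(z r)) (e := fun r => -(eps r))
        (c := fun r => 2 - z r) hS1 hK1
        (fun r hr => by have h := ((hdz r (hSpos r hr)).neg).congr_deriv (show -(eps r + (2 - z r) * z r) = -(eps r) + (2 - z r) * -(z r) by ring); exact h)
        (fun r hr => by linarith [(hzb r (hSR.trans hr)).2])
        (fun r hr => by linarith [(hzb r (hSR.trans hr)).1])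
        (fun r hr => by rw [abs_neg]; exact hSe r hr) r hr
      linarith
    · exact riccati_upper (y := z) (e := eps) (c := fun r => 2 - z r) hS1 hK1
        (fun r hr => (hdz r (hSpos r hr)).congr_deriv (by ring))
        (fun r hr => by linarith [(hzb r (hSR.trans hr)).2])
        (fun r hr => (hzb r (hSR.trans hr)).2)
        (fun r hr => hSe r hr) r hr
  -- Step F : existence of the limit ℓ of log w + r
  set L : ℝ → ℝ := fun r => Real.log (w r) + r with hLdef
  clear_value L
  have hdL : ∀ r : ℝ, 0 < r → HasDerivAt L (z r) r := by
    intro r hr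
    have h1 : HasDerivAt (fun s => Real.log (w s)) (w1 r / w r) r :=
      (hdw r hr).log (hwpos r hr).ne'
    have h2 := h1.add (hasDerivAt_id r)
    rw [hLdef]
    apply h2.congr_deriv
    rw [hzdef]
    show w1 r / w r + 1 = 1 + w1 r / w r
    ring
  obtain ⟨l, hl⟩ : ∃ l : ℝ, ∀ r : ℝ, S ≤ r → |L r - l| ≤ K / r := by
    have hdKr : ∀ r : ℝ, 0 < r → HasDerivAt (fun s : ℝ => K / s) (-(K / r^2)) r := by
      intro r hr
      have h : HasDerivAt (fun s : ℝ => K * s⁻¹) (K * (-1 / r^2)) r :=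
        ((hasDerivAt_id r).inv hr.ne').const_mul K
      simp only [div_eq_mul_inv]
      apply h.congr_deriv
      field_simp
    have hA : AntitoneOn (fun r => L r + K / r) (Set.Ici S) := by
      apply antiIci (f' := fun r => z r + -(K / r^2))
      · intro r hr
        exact (hdL r (hSpos r hr)).add (hdKr r (hSpos r hr))
      · intro r hr
        have h1 := (abs_le.mp (hz2 r hr)).2
        show z r + -(K/r^2) ≤ 0
        linarith
    have hB : MonotoneOn (fun r => L r - K / r) (Set.Ici S) := by
      apply monoIci (f' := fun r => z r - -(K / r^2))
      · intro r hr
        exact (hdL r (hSpos r hr)).sub (hdKr r (hSpos r hr))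
      · intro r hr
        have h1 := (abs_le.mp (hz2 r hr)).1
        show 0 ≤ z r - -(K/r^2)
        linarith
    have hKrnn : ∀ r : ℝ, S ≤ r → 0 ≤ K / r :=
      fun r hr => div_nonneg (by linarith) (hSpos r hr).le
    have hbdd : BddAbove ((fun r => L r - K / r) '' Set.Ici S) := by
      refine ⟨L S + K / S, ?_⟩
      rintro x ⟨s, hs, rfl⟩
      have h1 := hKrnn s hs
      have h2 : L s + K/s ≤ L S + K/S := hA Set.self_mem_Ici hs hs
      show L s - K/s ≤ L S + K/S
      linarith
    have hne : ((fun r => L r - K / r) '' Set.Ici S).Nonempty :=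
      ⟨_, ⟨S, Set.self_mem_Ici, rfl⟩⟩
    refine ⟨sSup ((fun r => L r - K / r) '' Set.Ici S), ?_⟩
    intro r hr
    have hBl : L r - K/r ≤ sSup ((fun r => L r - K / r) '' Set.Ici S) :=
      le_csSup hbdd ⟨r, Set.mem_Ici.mpr hr, rfl⟩
    have hlA : sSup ((fun r => L r - K / r) '' Set.Ici S) ≤ L r + K/r := by
      apply csSup_le hne
      rintro x ⟨s, hs, rfl⟩
      show L s - K/s ≤ L r + K/r
      rcases le_total s r with hsr | hrs
      · have h2 : L s - K/s ≤ L r - K/r := hB hs (Set.mem_Ici.mpr hr) hsr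
        have h3 := hKrnn r hr
        linarith
      · have h2 : L r + K/r ≤ L r + K/r := le_rfl
        have h4 : L s + K/s ≤ L r + K/r := hA (Set.mem_Ici.mpr hr) hs hrs
        have h3 := hKrnn s hs
        linarith
    have h9 := hKrnn r hr
    rw [abs_le]
    constructor <;> linarith
  -- Step G : asymptotics for r ≥ S
  set cq : ℝ := Real.exp l with hcqdef
  have hcqpos : 0 < cq := Real.exp_pos l
  clear_value cq
  have hwasym : ∀ r : ℝ, S ≤ r → |w r - cq * Real.exp (-r)| ≤ 2*K*cq * Real.exp (-r) / r := by
    intro r hr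
    have hrp := hSpos r hr
    have hwp := hwpos r hrp
    have hLr : Real.exp (L r - r) = w r := by
      have h9 : L r = Real.log (w r) + r := by rw [hLdef]
      rw [h9, add_sub_cancel_right, Real.exp_log hwp]
    have e1 : Real.exp l * Real.exp (-r) * Real.exp (L r - l) = Real.exp (L r - r) := by
      rw [← Real.exp_add, ← Real.exp_add]
      congr 1
      ring
    have hsplit : w r - cq * Real.exp (-r) = cq * Real.exp (-r) * (Real.exp (L r - l) - 1) := by
      rw [hcqdef]
      calc w r - Real.exp l * Real.exp (-r)
          = Real.exp (L r - r) - Real.exp l * Real.exp (-r) := by rw [hLr]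
        _ = Real.exp l * Real.exp (-r) * (Real.exp (L r - l) - 1) := by
            rw [mul_sub, mul_one, e1]
    have hLl := hl r hr
    have hKr1 : K / r ≤ 1 := by
      rw [div_le_one hrp]
      exact hSK.trans hr
    have habs1 : |L r - l| ≤ 1 := hLl.trans hKr1
    have h2 : |Real.exp (L r - l) - 1| ≤ 2 * |L r - l| := Real.abs_exp_sub_one_le habs1
    calc |w r - cq * Real.exp (-r)|
        = cq * Real.exp (-r) * |Real.exp (L r - l) - 1| := by
          rw [hsplit, abs_mul, abs_of_pos (mul_pos hcqpos (Real.exp_pos _))]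
      _ ≤ cq * Real.exp (-r) * (2 * (K/r)) := by
          apply mul_le_mul_of_nonneg_left _ (by positivity)
          refine h2.trans ?_
          linarith [hLl]
      _ = 2*K*cq * Real.exp (-r) / r := by ring
  have hwub : ∀ r : ℝ, S ≤ r → w r ≤ 3 * cq * Real.exp (-r) := by
    intro r hr
    have h1 := hwasym r hr
    have hrp := hSpos r hr
    have hKr : K / r ≤ 1 := by
      rw [div_le_one hrp]; exact hSK.trans hr
    have h2 : 2*K*cq * Real.exp (-r) / r ≤ 2 * cq * Real.exp (-r) := by
      rw [div_le_iff₀ hrp]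
      have : 2*K*cq * Real.exp (-r) = 2 * cq * Real.exp (-r) * K := by ring
      rw [this]
      apply mul_le_mul_of_nonneg_left (hSK.trans hr) (by positivity)
    have := (abs_le.mp h1).2
    linarith
  have hfinal : ∀ r : ℝ, S ≤ r →
      |q r - cq * r ^ (-ν) * Real.exp (-r)| + |deriv q r + cq * r ^ (-ν) * Real.exp (-r)|
        ≤ (cq * (4*K + 3 + 3*ν)) * r ^ (-ν - 1) * Real.exp (-r) := by
    intro r hr
    have hrp := hSpos r hr
    have hwp := hwpos r hrp
    have hq0 := hpos r hrp
    have hrν : (0:ℝ) < r ^ ν := Real.rpow_pos_of_pos hrp ν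
    have hrνn : (0:ℝ) < r ^ (-ν) := Real.rpow_pos_of_pos hrp _
    have hEx : (0:ℝ) < Real.exp (-r) := Real.exp_pos _
    have hKr1 : K / r ≤ 1 := by
      rw [div_le_one hrp]
      exact hSK.trans hr
    have hneg : r ^ (-ν) = (r ^ ν)⁻¹ := Real.rpow_neg hrp.le ν
    have hqw : q r = r ^ (-ν) * w r := by
      have h9 : w r = r ^ ν * q r := by rw [hwdef]
      rw [h9, hneg]
      field_simp
    have hpow : r ^ (-ν - 1) = r ^ (-ν) / r := by
      rw [Real.rpow_sub hrp, Real.rpow_one]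
    have hwa := hwasym r hr
    have hwub' := hwub r hr
    have hT1 : |q r - cq * r ^ (-ν) * Real.exp (-r)|
        ≤ 2*K*cq * (r ^ (-ν-1) * Real.exp (-r)) := by
      have heq1 : q r - cq * r ^ (-ν) * Real.exp (-r)
          = r ^ (-ν) * (w r - cq * Real.exp (-r)) := by
        rw [hqw]; ring
      rw [heq1, abs_mul, abs_of_pos hrνn]
      calc r ^ (-ν) * |w r - cq * Real.exp (-r)|
          ≤ r ^ (-ν) * (2*K*cq * Real.exp (-r) / r) :=
            mul_le_mul_of_nonneg_left hwa hrνn.le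
        _ = 2*K*cq * (r ^ (-ν-1) * Real.exp (-r)) := by rw [hpow]; ring
    have hb' : r ^ (ν-1) = r ^ ν / r := by rw [Real.rpow_sub hrp, Real.rpow_one]
    have hw1e : w1 r = ν * r ^ (ν-1) * q r + r ^ ν * deriv q r := by rw [hw1def]
    have hq' : deriv q r = r ^ (-ν) * w1 r - ν / r * q r := by
      rw [hw1e, hb', hneg]
      field_simp
      ring
    have hw1z : w1 r = (z r - 1) * w r := by
      have hz9 : z r = 1 + w1 r / w r := by rw [hzdef]
      rw [hz9]
      field_simp
      ring
    have hkey : deriv q r + cq * r ^ (-ν) * Real.exp (-r)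
        = r ^ (-ν) * (-(w r - cq * Real.exp (-r)) + z r * w r) - ν / r * q r := by
      rw [hq', hw1z]
      ring
    have hz2r := hz2 r hr
    have hT2 : |deriv q r + cq * r ^ (-ν) * Real.exp (-r)|
        ≤ (2*K*cq + 3*cq + 3*ν*cq) * (r ^ (-ν-1) * Real.exp (-r)) := by
      rw [hkey]
      have s1 : |r ^ (-ν) * (-(w r - cq * Real.exp (-r)) + z r * w r) - ν / r * q r|
          ≤ r ^ (-ν) * (|w r - cq * Real.exp (-r)| + |z r| * w r) + ν / r * q r := by
        calc |r ^ (-ν) * (-(w r - cq * Real.exp (-r)) + z r * w r) - ν / r * q r|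
            ≤ |r ^ (-ν) * (-(w r - cq * Real.exp (-r)) + z r * w r)| + |ν / r * q r| :=
              abs_sub _ _
          _ = r ^ (-ν) * |(-(w r - cq * Real.exp (-r)) + z r * w r)| + ν / r * q r := by
              rw [abs_mul, abs_of_pos hrνn,
                abs_of_nonneg (mul_nonneg (div_nonneg hν hrp.le) hq0.le)]
          _ ≤ r ^ (-ν) * (|w r - cq * Real.exp (-r)| + |z r| * w r) + ν / r * q r := by
              refine add_le_add ?_ le_rfl
              apply mul_le_mul_of_nonneg_left _ hrνn.le
              calc |(-(w r - cq * Real.exp (-r)) + z r * w r)|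
                  ≤ |(-(w r - cq * Real.exp (-r)))| + |z r * w r| := abs_add_le _ _
                _ = |w r - cq * Real.exp (-r)| + |z r| * w r := by
                    rw [abs_neg, abs_mul, abs_of_pos hwp]
      refine s1.trans ?_
      have hzb2 : |z r| * w r ≤ K/r^2 * (3*cq*Real.exp (-r)) :=
        mul_le_mul hz2r hwub' hwp.le (by positivity)
      have hqb : ν / r * q r ≤ ν / r * (r ^ (-ν) * (3*cq*Real.exp (-r))) := by
        apply mul_le_mul_of_nonneg_left _ (div_nonneg hν hrp.le)
        rw [hqw]
        exact mul_le_mul_of_nonneg_left hwub' hrνn.le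
      have hwa2 : r ^ (-ν) * (|w r - cq * Real.exp (-r)| + |z r| * w r)
          ≤ r ^ (-ν) * (2*K*cq * Real.exp (-r) / r + K/r^2 * (3*cq*Real.exp (-r))) :=
        mul_le_mul_of_nonneg_left (add_le_add hwa hzb2) hrνn.le
      have hA9 : (0:ℝ) < r ^ (-ν) * Real.exp (-r) / r := by positivity
      have heq9 : r ^ (-ν) * (2*K*cq * Real.exp (-r) / r + K/r^2 * (3*cq*Real.exp (-r)))
          + ν / r * (r ^ (-ν) * (3*cq*Real.exp (-r)))
          = (r ^ (-ν) * Real.exp (-r) / r) * (2*K*cq + 3*cq*(K/r) + 3*ν*cq) := by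
        field_simp
      have h10 : 2*K*cq + 3*cq*(K/r) + 3*ν*cq ≤ 2*K*cq + 3*cq + 3*ν*cq := by
        have h11 : 3*cq*(K/r) ≤ 3*cq := by nlinarith [hcqpos, hKr1]
        linarith
      have hfin : r ^ (-ν) * (2*K*cq * Real.exp (-r) / r + K/r^2 * (3*cq*Real.exp (-r)))
          + ν / r * (r ^ (-ν) * (3*cq*Real.exp (-r)))
          ≤ (2*K*cq + 3*cq + 3*ν*cq) * (r ^ (-ν-1) * Real.exp (-r)) := by
        rw [heq9, hpow]
        calc (r ^ (-ν) * Real.exp (-r) / r) * (2*K*cq + 3*cq*(K/r) + 3*ν*cq)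
            ≤ (r ^ (-ν) * Real.exp (-r) / r) * (2*K*cq + 3*cq + 3*ν*cq) :=
              mul_le_mul_of_nonneg_left h10 hA9.le
          _ = (2*K*cq + 3*cq + 3*ν*cq) * (r ^ (-ν) / r * Real.exp (-r)) := by ring
      exact le_trans (add_le_add hwa2 hqb) hfin
    calc |q r - cq * r ^ (-ν) * Real.exp (-r)| + |deriv q r + cq * r ^ (-ν) * Real.exp (-r)|
        ≤ 2*K*cq * (r ^ (-ν-1) * Real.exp (-r))
          + (2*K*cq + 3*cq + 3*ν*cq) * (r ^ (-ν-1) * Real.exp (-r)) := add_le_add hT1 hT2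
      _ = (cq * (4*K + 3 + 3*ν)) * r ^ (-ν - 1) * Real.exp (-r) := by ring
  -- Step H : compact interval + conclusion
  have hexp1 : ∀ r : ℝ, 0 < r → r ^ (-(((d:ℝ)+1)/2)) = r ^ (-ν - 1) := by
    intro r hr
    congr 1
    rw [hνdef]
    ring
  have hsub : Set.Icc (1:ℝ) S ⊆ Set.Ioi 0 := fun x hx => lt_of_lt_of_le one_pos hx.1
  have hq_c : ContinuousOn q (Set.Icc 1 S) := (hreg.continuousOn).mono hsub
  have hq'_c : ContinuousOn (deriv q) (Set.Icc 1 S) :=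
    (hreg.continuousOn_deriv_of_isOpen isOpen_Ioi (by norm_num)).mono hsub
  have hrpow_c : ContinuousOn (fun r : ℝ => r ^ (-ν)) (Set.Icc 1 S) := by
    apply ContinuousOn.rpow_const continuousOn_id
    intro x hx
    exact Or.inl (ne_of_gt (lt_of_lt_of_le one_pos hx.1))
  have hexp_c : Continuous fun r : ℝ => Real.exp (-r) :=
    Real.continuous_exp.comp continuous_neg
  have hF_c : ContinuousOn (fun r => |q r - cq * r ^ (-ν) * Real.exp (-r)|
      + |deriv q r + cq * r ^ (-ν) * Real.exp (-r)|) (Set.Icc 1 S) := by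
    apply ContinuousOn.add
    · exact (hq_c.sub ((continuousOn_const.mul hrpow_c).mul hexp_c.continuousOn)).abs
    · exact (hq'_c.add ((continuousOn_const.mul hrpow_c).mul hexp_c.continuousOn)).abs
  have hG_c : ContinuousOn (fun r : ℝ => r ^ (-ν-1) * Real.exp (-r)) (Set.Icc 1 S) := by
    apply ContinuousOn.mul _ hexp_c.continuousOn
    apply ContinuousOn.rpow_const continuousOn_id
    intro x hx
    exact Or.inl (ne_of_gt (lt_of_lt_of_le one_pos hx.1))
  have hne9 : (Set.Icc (1:ℝ) S).Nonempty := Set.nonempty_Icc.mpr hS1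
  obtain ⟨xM, hxM, hFmax⟩ := isCompact_Icc.exists_isMaxOn hne9 hF_c
  obtain ⟨xm, hxm, hGmin⟩ := isCompact_Icc.exists_isMinOn hne9 hG_c
  have hxmpos : (0:ℝ) < xm := lt_of_lt_of_le one_pos hxm.1
  have hGxm : 0 < xm ^ (-ν-1) * Real.exp (-xm) := by positivity
  set FM := |q xM - cq * xM ^ (-ν) * Real.exp (-xM)|
    + |deriv q xM + cq * xM ^ (-ν) * Real.exp (-xM)| with hFMdef
  have hFMnn : 0 ≤ FM := by rw [hFMdef]; positivity
  set C3 := (FM + 1) / (xm ^ (-ν-1) * Real.exp (-xm)) with hC3def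
  have hC3eq : C3 * (xm ^ (-ν-1) * Real.exp (-xm)) = FM + 1 := by
    rw [hC3def]
    exact div_mul_cancel₀ _ hGxm.ne'
  have hC3pos : 0 < C3 := by
    rw [hC3def]
    exact div_pos (by linarith) hGxm
  clear_value FM C3
  have hCSpos : 0 < cq * (4*K + 3 + 3*ν) := by nlinarith [hcqpos, hK1, hν]
  refine ⟨cq, hcqpos, cq * (4*K + 3 + 3*ν) + C3, by linarith, ?_⟩
  intro r hr1
  have hrp : (0:ℝ) < r := lt_of_lt_of_le one_pos hr1
  rw [hexp1 r hrp]
  have hGr : 0 < r ^ (-ν-1) * Real.exp (-r) := by positivity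
  rcases le_total S r with hSr | hrS
  · have h := hfinal r hSr
    have h2 : (cq * (4*K + 3 + 3*ν)) * r ^ (-ν - 1) * Real.exp (-r)
        ≤ (cq * (4*K + 3 + 3*ν) + C3) * r ^ (-ν - 1) * Real.exp (-r) := by
      nlinarith [mul_pos hC3pos hGr]
    linarith
  · have hmem : r ∈ Set.Icc (1:ℝ) S := ⟨hr1, hrS⟩
    have h1 : |q r - cq * r ^ (-ν) * Real.exp (-r)|
        + |deriv q r + cq * r ^ (-ν) * Real.exp (-r)| ≤ FM := by
      rw [hFMdef]
      exact hFmax hmem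
    have h2 : xm ^ (-ν-1) * Real.exp (-xm) ≤ r ^ (-ν-1) * Real.exp (-r) := hGmin hmem
    have h3 : C3 * (xm ^ (-ν-1) * Real.exp (-xm)) ≤ C3 * (r ^ (-ν-1) * Real.exp (-r)) :=
      mul_le_mul_of_nonneg_left h2 hC3pos.le
    have h4 : C3 * (r ^ (-ν-1) * Real.exp (-r))
        ≤ (cq * (4*K + 3 + 3*ν) + C3) * r ^ (-ν - 1) * Real.exp (-r) := by
      nlinarith [mul_pos hCSpos hGr]
    linarith

end
end

section
/- Let d ≥ 1 and let Q : ℝ^d → ℝ be measurable with |Q(x)| ≤ C₁ (1+|x|)^{−(d−1)/2} e^{−|x|} for all x ∈ ℝ^d and some C₁ > 0. Then for any exponents 0 < m < m' there exists C > 0 such that for all z₁, z₂ ∈ ℝ^d with |z₁ − z₂| ≥ 1: ∫_{ℝ^d} |Q(x−z₁)|^m |Q(x−z₂)|^{m'} dx ≤ C (|z₁−z₂|^{−(d−1)/2} e^{−|z₁−z₂|})^m. -/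
noncomputable section

open MeasureTheory

/-- Euclidean space `ℝ^d`. -/
abbrev Euc (d : ℕ) := EuclideanSpace ℝ (Fin d)


lemma aux_pow_le_exp {x : ℝ} (hx : 0 ≤ x) (n : ℕ) : x ^ n / n.factorial ≤ Real.exp x := by
  calc x ^ n / n.factorial ≤ ∑ i ∈ Finset.range (n + 1), x ^ i / i.factorial := by
        refine Finset.single_le_sum (f := fun i => x ^ i / (i.factorial : ℝ)) ?_ ?_
        · intro i _
          positivity
        · exact Finset.self_mem_range_succ n
    _ ≤ Real.exp x := Real.sum_le_exp_of_nonneg hx _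

lemma aux_integrable_exp (d : ℕ) (ε : ℝ) (hε : 0 < ε) :
    Integrable (fun x : Euc d => Real.exp (-(ε * ‖x‖))) := by
  set k : ℕ := d + 1 with hkdef
  have hk : (Module.finrank ℝ (Euc d) : ℝ) < (k : ℝ) := by
    simp [hkdef, finrank_euclideanSpace]
  have hint : Integrable (fun x : Euc d =>
      (Real.exp ε * k.factorial / ε ^ k) * (1 + ‖x‖) ^ (-(k : ℝ))) :=
    (integrable_one_add_norm (E := Euc d) hk).const_mul _
  refine hint.mono' ?_ ?_
  · exact (Real.continuous_exp.comp (continuous_const.mul continuous_norm).neg).aestronglyMeasurable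
  · filter_upwards with x
    have h1 : (0:ℝ) < 1 + ‖x‖ := by positivity
    rw [Real.norm_eq_abs, abs_of_pos (Real.exp_pos _)]
    have key : (ε * (1 + ‖x‖)) ^ k / k.factorial ≤ Real.exp (ε * (1 + ‖x‖)) :=
      aux_pow_le_exp (by positivity) k
    have hexp : Real.exp (-(ε * ‖x‖)) =
        Real.exp ε * Real.exp (-(ε * (1 + ‖x‖))) := by
      rw [← Real.exp_add]; ring_nf
    rw [hexp]
    have h2 : Real.exp (-(ε * (1 + ‖x‖))) ≤ k.factorial / (ε * (1 + ‖x‖)) ^ k := by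
      rw [Real.exp_neg, inv_le_iff_one_le_mul₀ (Real.exp_pos _), div_mul_eq_mul_div,
        le_div_iff₀ (by positivity)]
      calc (1:ℝ) * (ε * (1 + ‖x‖)) ^ k
          = ((ε * (1 + ‖x‖)) ^ k / k.factorial) * k.factorial := by
            field_simp
        _ ≤ Real.exp (ε * (1 + ‖x‖)) * k.factorial :=
            mul_le_mul_of_nonneg_right key (by positivity)
        _ = (k.factorial : ℝ) * Real.exp (ε * (1 + ‖x‖)) := by ring
    calc Real.exp ε * Real.exp (-(ε * (1 + ‖x‖)))
        ≤ Real.exp ε * (k.factorial / (ε * (1 + ‖x‖)) ^ k) :=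
          mul_le_mul_of_nonneg_left h2 (Real.exp_pos _).le
      _ = (Real.exp ε * k.factorial / ε ^ k) * (1 + ‖x‖) ^ (-(k : ℝ)) := by
          rw [Real.rpow_neg h1.le, Real.rpow_natCast]
          field_simp [mul_pow]
          rw [mul_pow]

lemma aux_key (a m m' u v r : ℝ) (ha : 0 ≤ a) (hm : 0 < m) (hmm : m ≤ m')
    (hu : 0 ≤ u) (hv : 0 ≤ v) (hr : 0 ≤ r) (htri : r ≤ u + v) :
    ((1 + u) ^ (-a) * Real.exp (-u)) ^ m * ((1 + v) ^ (-a) * Real.exp (-v)) ^ m'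
      ≤ ((1 + r) ^ (-a) * Real.exp (-r)) ^ m * Real.exp (-((m' - m) * v)) := by
  have h1u : (0:ℝ) < 1 + u := by linarith
  have h1v : (0:ℝ) < 1 + v := by linarith
  have h1r : (0:ℝ) < 1 + r := by linarith
  have e1 : ((1 + u) ^ (-a) * Real.exp (-u)) ^ m
      = (1 + u) ^ (-a * m) * Real.exp (-u * m) := by
    rw [Real.mul_rpow (Real.rpow_pos_of_pos h1u _).le (Real.exp_pos _).le,
      ← Real.rpow_mul h1u.le, ← Real.exp_mul]
  have e2 : ((1 + v) ^ (-a) * Real.exp (-v)) ^ m'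
      = (1 + v) ^ (-a * m') * Real.exp (-v * m') := by
    rw [Real.mul_rpow (Real.rpow_pos_of_pos h1v _).le (Real.exp_pos _).le,
      ← Real.rpow_mul h1v.le, ← Real.exp_mul]
  have e3 : ((1 + r) ^ (-a) * Real.exp (-r)) ^ m
      = (1 + r) ^ (-a * m) * Real.exp (-r * m) := by
    rw [Real.mul_rpow (Real.rpow_pos_of_pos h1r _).le (Real.exp_pos _).le,
      ← Real.rpow_mul h1r.le, ← Real.exp_mul]
  rw [e1, e2, e3]
  have hA : (1 + v) ^ (-a * m') ≤ (1 + v) ^ (-a * m) :=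
    Real.rpow_le_rpow_of_exponent_le (by linarith) (by nlinarith)
  have hB : (1 + u) ^ (-a * m) * (1 + v) ^ (-a * m) ≤ (1 + r) ^ (-a * m) := by
    rw [← Real.mul_rpow h1u.le h1v.le]
    apply Real.rpow_le_rpow_of_nonpos h1r (by nlinarith) (by nlinarith)
  have hC : Real.exp (-u * m) * Real.exp (-v * m')
      ≤ Real.exp (-r * m) * Real.exp (-((m' - m) * v)) := by
    rw [← Real.exp_add, ← Real.exp_add]
    apply Real.exp_le_exp.mpr
    nlinarith
  calc (1 + u) ^ (-a * m) * Real.exp (-u * m) * ((1 + v) ^ (-a * m') * Real.exp (-v * m'))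
      ≤ (1 + u) ^ (-a * m) * Real.exp (-u * m) * ((1 + v) ^ (-a * m) * Real.exp (-v * m')) := by
        apply mul_le_mul_of_nonneg_left (mul_le_mul_of_nonneg_right hA (Real.exp_pos _).le)
        positivity
    _ = ((1 + u) ^ (-a * m) * (1 + v) ^ (-a * m)) * (Real.exp (-u * m) * Real.exp (-v * m')) := by
        ring
    _ ≤ (1 + r) ^ (-a * m) * (Real.exp (-r * m) * Real.exp (-((m' - m) * v))) := by
        apply mul_le_mul hB hC (by positivity) (by positivity)
    _ = (1 + r) ^ (-a * m) * Real.exp (-r * m) * Real.exp (-((m' - m) * v)) := by ring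

/-- Nonlinear interaction estimate (si2): for a function with the ground-state
decay rate and exponents `0 < m < m'`, the interaction integral is controlled by
the `m`-th power of the ground-state profile at the distance between the centers. -/
theorem statement16
    (d : ℕ) (hd : 1 ≤ d) (Q : Euc d → ℝ) (hmeas : Measurable Q)
    (C₁ : ℝ) (hC₁ : 0 < C₁)
    (hdecay : ∀ x, |Q x| ≤ C₁ * (1 + ‖x‖) ^ (-(((d : ℝ) - 1) / 2)) * Real.exp (-‖x‖))
    (m m' : ℝ) (hm : 0 < m) (hmm : m < m') :
    ∃ C > (0 : ℝ), ∀ z₁ z₂ : Euc d, 1 ≤ ‖z₁ - z₂‖ →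
      (∫ x, |Q (x - z₁)| ^ m * |Q (x - z₂)| ^ m')
        ≤ C * (‖z₁ - z₂‖ ^ (-(((d : ℝ) - 1) / 2)) * Real.exp (-‖z₁ - z₂‖)) ^ m := by
  set a : ℝ := ((d : ℝ) - 1) / 2 with hadef
  have ha : 0 ≤ a := by
    have : (1:ℝ) ≤ (d:ℝ) := by exact_mod_cast hd
    simp only [hadef]; linarith
  set ε : ℝ := m' - m with hεdef
  have hε : 0 < ε := by simp only [hεdef]; linarith
  set K : ℝ := ∫ x : Euc d, Real.exp (-(ε * ‖x‖)) with hKdef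
  have hK0 : 0 ≤ K := integral_nonneg fun x => (Real.exp_pos _).le
  refine ⟨C₁ ^ (m + m') * K + 1, by positivity, ?_⟩
  intro z₁ z₂ hz
  set r : ℝ := ‖z₁ - z₂‖ with hrdef
  have hr0 : (0:ℝ) < r := lt_of_lt_of_le one_pos hz
  set c : ℝ := C₁ ^ (m + m') * ((1 + r) ^ (-a) * Real.exp (-r)) ^ m with hcdef
  have hc0 : 0 ≤ c := by positivity
  have hgint : Integrable (fun x : Euc d => c * Real.exp (-(ε * ‖x - z₂‖))) :=
    ((aux_integrable_exp d ε hε).comp_sub_right z₂).const_mul c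
  have hbound : ∀ x : Euc d, |Q (x - z₁)| ^ m * |Q (x - z₂)| ^ m'
      ≤ c * Real.exp (-(ε * ‖x - z₂‖)) := by
    intro x
    set u : ℝ := ‖x - z₁‖ with hudef
    set v : ℝ := ‖x - z₂‖ with hvdef
    have hu : 0 ≤ u := norm_nonneg _
    have hv : 0 ≤ v := norm_nonneg _
    have htri : r ≤ u + v := by
      have h1 : z₁ - z₂ = (x - z₂) - (x - z₁) := by abel
      calc r = ‖(x - z₂) - (x - z₁)‖ := by rw [hrdef, h1]
        _ ≤ ‖x - z₂‖ + ‖x - z₁‖ := norm_sub_le _ _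
        _ = u + v := by ring
    have hQ1 : |Q (x - z₁)| ^ m ≤ (C₁ * ((1 + u) ^ (-a) * Real.exp (-u))) ^ m := by
      apply Real.rpow_le_rpow (abs_nonneg _) _ hm.le
      calc |Q (x - z₁)| ≤ C₁ * (1 + u) ^ (-a) * Real.exp (-u) := hdecay _
        _ = C₁ * ((1 + u) ^ (-a) * Real.exp (-u)) := by ring
    have hQ2 : |Q (x - z₂)| ^ m' ≤ (C₁ * ((1 + v) ^ (-a) * Real.exp (-v))) ^ m' := by
      apply Real.rpow_le_rpow (abs_nonneg _) _ (le_trans hm.le hmm.le)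
      calc |Q (x - z₂)| ≤ C₁ * (1 + v) ^ (-a) * Real.exp (-v) := hdecay _
        _ = C₁ * ((1 + v) ^ (-a) * Real.exp (-v)) := by ring
    have hb1 : (0:ℝ) ≤ (1 + u) ^ (-a) * Real.exp (-u) := by positivity
    have hb2 : (0:ℝ) ≤ (1 + v) ^ (-a) * Real.exp (-v) := by positivity
    calc |Q (x - z₁)| ^ m * |Q (x - z₂)| ^ m'
        ≤ (C₁ * ((1 + u) ^ (-a) * Real.exp (-u))) ^ m
            * (C₁ * ((1 + v) ^ (-a) * Real.exp (-v))) ^ m' := by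
          apply mul_le_mul hQ1 hQ2 (Real.rpow_nonneg (abs_nonneg _) _) (by positivity)
      _ = C₁ ^ (m + m') * (((1 + u) ^ (-a) * Real.exp (-u)) ^ m
            * ((1 + v) ^ (-a) * Real.exp (-v)) ^ m') := by
          rw [Real.mul_rpow hC₁.le hb1, Real.mul_rpow hC₁.le hb2, Real.rpow_add hC₁]
          ring
      _ ≤ C₁ ^ (m + m') * (((1 + r) ^ (-a) * Real.exp (-r)) ^ m
            * Real.exp (-((m' - m) * v))) := by
          apply mul_le_mul_of_nonneg_left
            (aux_key a m m' u v r ha hm hmm.le hu hv hr0.le htri) (by positivity)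
      _ = c * Real.exp (-(ε * ‖x - z₂‖)) := by
          rw [hcdef, hεdef, hvdef]; ring
  have hf0 : (0 : Euc d → ℝ) ≤ᵐ[volume] fun x : Euc d => |Q (x - z₁)| ^ m * |Q (x - z₂)| ^ m' := by
    filter_upwards with x
    positivity
  have hint : (∫ x, |Q (x - z₁)| ^ m * |Q (x - z₂)| ^ m')
      ≤ ∫ x, c * Real.exp (-(ε * ‖x - z₂‖)) :=
    integral_mono_of_nonneg hf0 hgint (Filter.Eventually.of_forall hbound)
  have hgval : (∫ x, c * Real.exp (-(ε * ‖x - z₂‖))) = c * K := by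
    rw [MeasureTheory.integral_const_mul, hKdef]
    congr 1
    exact integral_sub_right_eq_self (fun x : Euc d => Real.exp (-(ε * ‖x‖))) z₂
  have hprofile : ((1 + r) ^ (-a) * Real.exp (-r)) ^ m ≤ (r ^ (-a) * Real.exp (-r)) ^ m := by
    apply Real.rpow_le_rpow (by positivity) _ hm.le
    apply mul_le_mul_of_nonneg_right _ (Real.exp_pos _).le
    exact Real.rpow_le_rpow_of_nonpos hr0 (by linarith) (by linarith)
  calc (∫ x, |Q (x - z₁)| ^ m * |Q (x - z₂)| ^ m')
      ≤ c * K := hgval ▸ hint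
    _ = (C₁ ^ (m + m') * K) * ((1 + r) ^ (-a) * Real.exp (-r)) ^ m := by
        rw [hcdef]; ring
    _ ≤ (C₁ ^ (m + m') * K + 1) * (r ^ (-a) * Real.exp (-r)) ^ m := by
        apply mul_le_mul (by linarith) hprofile (by positivity) (by positivity)

end
end

section
/- Let d ≥ 1 and p > 2, and let Q : ℝ^d → ℝ be measurable with |Q(x)| ≤ C₁ (1+|x|)^{−(d−1)/2} e^{−|x|} for all x and some C₁ > 0. Then for any θ with 1 < θ < min(p−1, 2) there exists C > 0 such that for all z₁, z₂ ∈ ℝ^d with |z₁ − z₂| ≥ 1: ∫_{ℝ^d} |Q(x−z₁)|² |Q(x−z₂)|^{p−1} dx ≤ C (|z₁−z₂|^{−(d−1)/2} e^{−|z₁−z₂|})^{θ}. -/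
noncomputable section

open MeasureTheory

lemma aux_exp_integrable (d : ℕ) {ε : ℝ} (hε : 0 < ε) :
    Integrable (fun x : Euc d => Real.exp (-(ε * ‖x‖))) := by
  set n : ℕ := d + 1
  have hr : (Module.finrank ℝ (Euc d) : ℝ) < (n : ℝ) := by
    simp [n, finrank_euclideanSpace]
  set c : ℝ := (1 + n / ε) ^ n
  have hc : 0 < c := by positivity
  have hint := (integrable_one_add_norm (E := Euc d) (μ := volume) hr).const_mul c
  refine hint.mono' ?_ ?_
  · exact (Real.continuous_exp.comp ((continuous_const.mul continuous_norm).neg)).aestronglyMeasurable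
  · filter_upwards with x
    have hx : (0:ℝ) ≤ ‖x‖ := norm_nonneg x
    rw [Real.norm_eq_abs, abs_of_pos (Real.exp_pos _)]
    have key : (1 + ‖x‖) ^ n ≤ c * Real.exp (ε * ‖x‖) := by
      have h1 : 1 + ‖x‖ ≤ (1 + n / ε) * Real.exp (ε * ‖x‖ / n) := by
        have hn : (0:ℝ) < n := by positivity
        have hs : ε * ‖x‖ / n ≤ Real.exp (ε * ‖x‖ / n) := (Real.add_one_le_exp _).trans' (by linarith)
        have h1e : (1:ℝ) ≤ Real.exp (ε * ‖x‖ / n) := Real.one_le_exp (by positivity)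
        have : ‖x‖ ≤ (n / ε) * Real.exp (ε * ‖x‖ / n) := by
          have := mul_le_mul_of_nonneg_left hs (le_of_lt (show (0:ℝ) < n / ε by positivity))
          calc ‖x‖ = (n / ε) * (ε * ‖x‖ / n) := by field_simp
          _ ≤ (n / ε) * Real.exp (ε * ‖x‖ / n) := this
        nlinarith [mul_le_mul_of_nonneg_left h1e (le_of_lt (show (0:ℝ) < n/ε by positivity))]
      calc (1 + ‖x‖) ^ n ≤ ((1 + n / ε) * Real.exp (ε * ‖x‖ / n)) ^ n :=
            pow_le_pow_left₀ (by positivity) h1 n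
        _ = c * (Real.exp (ε * ‖x‖ / n)) ^ n := by rw [mul_pow]
        _ = c * Real.exp (ε * ‖x‖) := by
            rw [← Real.exp_nat_mul]
            congr 1
            congr 1; have hn0 : (n:ℝ) ≠ 0 := by positivity
            field_simp
    have hpos : (0:ℝ) < (1 + ‖x‖) ^ n := by positivity
    have : Real.exp (-(ε * ‖x‖)) * (1 + ‖x‖) ^ n ≤ c := by
      rw [Real.exp_neg]
      rw [inv_mul_le_iff₀ (Real.exp_pos _)]
      linarith [key]
    have hrw : (1 + ‖x‖) ^ (-(n:ℝ)) = ((1 + ‖x‖) ^ n)⁻¹ := by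
      rw [Real.rpow_neg (by positivity), Real.rpow_natCast]
    rw [hrw, ← div_eq_mul_inv, le_div_iff₀ hpos]
    linarith

lemma aux_pointwise (p α θ ε a b R : ℝ) (hα : 0 ≤ α) (ha : 0 ≤ a) (hb : 0 ≤ b)
    (hR : 1 ≤ R) (hab : R ≤ a + b) (hθ : 0 < θ) (hε : 0 < ε)
    (h2 : θ + ε ≤ 2) (hp1 : θ + ε ≤ p - 1) :
    ((1 + a) ^ (-α) * Real.exp (-a)) ^ (2:ℝ) * ((1 + b) ^ (-α) * Real.exp (-b)) ^ (p - 1)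
      ≤ (R ^ (-α) * Real.exp (-R)) ^ θ * Real.exp (-(ε * a)) := by
  have h1a : (0:ℝ) < 1 + a := by linarith
  have h1b : (0:ℝ) < 1 + b := by linarith
  have hRpos : (0:ℝ) < R := by linarith
  have hp1' : (0:ℝ) ≤ p - 1 := by linarith
  -- expand LHS
  have e1 : ((1 + a) ^ (-α) * Real.exp (-a)) ^ (2:ℝ)
      = (1 + a) ^ (-(2*α)) * Real.exp (-(2*a)) := by
    rw [Real.mul_rpow (by positivity) (by positivity), ← Real.rpow_mul h1a.le, ← Real.exp_mul]
    ring_nf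
  have e2 : ((1 + b) ^ (-α) * Real.exp (-b)) ^ (p-1)
      = (1 + b) ^ (-((p-1)*α)) * Real.exp (-((p-1)*b)) := by
    rw [Real.mul_rpow (by positivity) (by positivity), ← Real.rpow_mul h1b.le, ← Real.exp_mul]
    ring_nf
  rw [e1, e2]
  have poly : (1 + a) ^ (-(2*α)) * (1 + b) ^ (-((p-1)*α)) ≤ (R ^ (-α)) ^ θ := by
    have pa : (1 + a) ^ (-(2*α)) ≤ (1 + a) ^ (-(θ*α)) :=
      Real.rpow_le_rpow_of_exponent_le (by linarith) (by nlinarith)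
    have pb : (1 + b) ^ (-((p-1)*α)) ≤ (1 + b) ^ (-(θ*α)) :=
      Real.rpow_le_rpow_of_exponent_le (by linarith) (by nlinarith)
    have pm : (1 + a) ^ (-(θ*α)) * (1 + b) ^ (-(θ*α)) = ((1+a)*(1+b)) ^ (-(θ*α)) :=
      (Real.mul_rpow h1a.le h1b.le).symm
    have pbase : R ≤ (1+a)*(1+b) := by nlinarith
    have pR : ((1+a)*(1+b)) ^ (-(θ*α)) ≤ R ^ (-(θ*α)) :=
      Real.rpow_le_rpow_of_nonpos hRpos pbase (neg_nonpos.mpr (by positivity))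
    have pRe : R ^ (-(θ*α)) = (R ^ (-α)) ^ θ := by
      rw [← Real.rpow_mul hRpos.le]
      ring_nf
    calc (1 + a) ^ (-(2*α)) * (1 + b) ^ (-((p-1)*α))
        ≤ (1 + a) ^ (-(θ*α)) * (1 + b) ^ (-(θ*α)) :=
          mul_le_mul pa pb (by positivity) (by positivity)
      _ = ((1+a)*(1+b)) ^ (-(θ*α)) := pm
      _ ≤ R ^ (-(θ*α)) := pR
      _ = (R ^ (-α)) ^ θ := pRe
  have expo : Real.exp (-(2*a)) * Real.exp (-((p-1)*b))
      ≤ (Real.exp (-R)) ^ θ * Real.exp (-(ε * a)) := by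
    rw [← Real.exp_add, ← Real.exp_mul, ← Real.exp_add]
    apply Real.exp_le_exp.mpr
    nlinarith
  calc (1 + a) ^ (-(2*α)) * Real.exp (-(2*a)) * ((1 + b) ^ (-((p-1)*α)) * Real.exp (-((p-1)*b)))
      = ((1 + a) ^ (-(2*α)) * (1 + b) ^ (-((p-1)*α))) * (Real.exp (-(2*a)) * Real.exp (-((p-1)*b))) := by ring
    _ ≤ (R ^ (-α)) ^ θ * ((Real.exp (-R)) ^ θ * Real.exp (-(ε * a))) := by
        apply mul_le_mul poly expo (by positivity) (by positivity)
    _ = (R ^ (-α) * Real.exp (-R)) ^ θ * Real.exp (-(ε * a)) := by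
        rw [Real.mul_rpow (by positivity) (by positivity)]
        ring

/-- Nonlinear interaction estimate: for a function with the ground-state decay
rate and any `1 < θ < min(p−1, 2)`, the interaction integral
`∫ |Q(·−z₁)|² |Q(·−z₂)|^{p−1}` is controlled by the `θ`-th power of the
ground-state profile at the distance between the centers. -/
theorem statement17
    (d : ℕ) (hd : 1 ≤ d) (p : ℝ) (hp : 2 < p) (Q : Euc d → ℝ) (hmeas : Measurable Q)
    (C₁ : ℝ) (hC₁ : 0 < C₁)
    (hdecay : ∀ x, |Q x| ≤ C₁ * (1 + ‖x‖) ^ (-(((d : ℝ) - 1) / 2)) * Real.exp (-‖x‖))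
    (θ : ℝ) (hθ : 1 < θ) (hθ' : θ < min (p - 1) 2) :
    ∃ C > (0 : ℝ), ∀ z₁ z₂ : Euc d, 1 ≤ ‖z₁ - z₂‖ →
      (∫ x, |Q (x - z₁)| ^ (2 : ℝ) * |Q (x - z₂)| ^ (p - 1))
        ≤ C * (‖z₁ - z₂‖ ^ (-(((d : ℝ) - 1) / 2)) * Real.exp (-‖z₁ - z₂‖)) ^ θ := by
  set α : ℝ := ((d : ℝ) - 1) / 2 with hαdef
  have hα : 0 ≤ α := by
    have : (1:ℝ) ≤ d := by exact_mod_cast hd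
    simp only [hαdef]; linarith
  set ε : ℝ := min (p - 1) 2 - θ with hεdef
  have hε : 0 < ε := by simp only [hεdef]; linarith
  have h2 : θ + ε ≤ 2 := by
    have := min_le_right (p-1) 2; simp only [hεdef]; linarith
  have hp1 : θ + ε ≤ p - 1 := by
    have := min_le_left (p-1) 2; simp only [hεdef]; linarith
  have hθ0 : (0:ℝ) < θ := by linarith
  set K : ℝ := C₁ ^ (2:ℝ) * C₁ ^ (p - 1) with hKdef
  have hK : 0 < K := by positivity
  have hI := aux_exp_integrable d hε
  set I : ℝ := ∫ x : Euc d, Real.exp (-(ε * ‖x‖)) with hIdef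
  have hI0 : 0 ≤ I := integral_nonneg fun x => (Real.exp_pos _).le
  refine ⟨K * I + 1, by positivity, fun z₁ z₂ hR => ?_⟩
  set R : ℝ := ‖z₁ - z₂‖ with hRdef
  have hRpos : 0 < R := by linarith
  set P : ℝ := (R ^ (-α) * Real.exp (-R)) ^ θ with hPdef
  have hP : 0 < P := by positivity
  -- the dominating function
  have hg : Integrable (fun x : Euc d => K * P * Real.exp (-(ε * ‖x - z₁‖))) := by
    exact ((aux_exp_integrable d hε).comp_sub_right z₁).const_mul _
  have hbound : ∀ x : Euc d, |Q (x - z₁)| ^ (2:ℝ) * |Q (x - z₂)| ^ (p - 1)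
      ≤ K * P * Real.exp (-(ε * ‖x - z₁‖)) := by
    intro x
    set a : ℝ := ‖x - z₁‖
    set b : ℝ := ‖x - z₂‖
    have ha : 0 ≤ a := norm_nonneg _
    have hb : 0 ≤ b := norm_nonneg _
    have hab : R ≤ a + b := by
      calc R = ‖(x - z₂) - (x - z₁)‖ := by rw [hRdef]; congr 1; abel
        _ ≤ b + a := norm_sub_le _ _
        _ = a + b := by ring
    have h1 : |Q (x - z₁)| ^ (2:ℝ) ≤ (C₁ * ((1 + a) ^ (-α) * Real.exp (-a))) ^ (2:ℝ) := by
      apply Real.rpow_le_rpow (abs_nonneg _) _ (by norm_num)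
      have := hdecay (x - z₁); rw [← mul_assoc]; exact this
    have h2' : |Q (x - z₂)| ^ (p-1) ≤ (C₁ * ((1 + b) ^ (-α) * Real.exp (-b))) ^ (p-1) := by
      apply Real.rpow_le_rpow (abs_nonneg _) _ (by linarith)
      have := hdecay (x - z₂); rw [← mul_assoc]; exact this
    have key := aux_pointwise p α θ ε a b R hα ha hb hR hab hθ0 hε h2 hp1
    calc |Q (x - z₁)| ^ (2:ℝ) * |Q (x - z₂)| ^ (p - 1)
        ≤ (C₁ * ((1 + a) ^ (-α) * Real.exp (-a))) ^ (2:ℝ)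
            * (C₁ * ((1 + b) ^ (-α) * Real.exp (-b))) ^ (p-1) := by
          apply mul_le_mul h1 h2' (Real.rpow_nonneg (abs_nonneg _) _) (Real.rpow_nonneg (by positivity) _)
      _ = K * (((1 + a) ^ (-α) * Real.exp (-a)) ^ (2:ℝ)
            * ((1 + b) ^ (-α) * Real.exp (-b)) ^ (p-1)) := by
          rw [Real.mul_rpow hC₁.le (by positivity), Real.mul_rpow hC₁.le (by positivity), hKdef]
          ring
      _ ≤ K * (P * Real.exp (-(ε * a))) := by
          apply mul_le_mul_of_nonneg_left _ hK.le
          rw [hPdef]; exact key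
      _ = K * P * Real.exp (-(ε * a)) := by ring
  have hmono : (∫ x, |Q (x - z₁)| ^ (2:ℝ) * |Q (x - z₂)| ^ (p - 1))
      ≤ ∫ x, K * P * Real.exp (-(ε * ‖x - z₁‖)) := by
    apply integral_mono_of_nonneg
    · filter_upwards with x
      positivity
    · exact hg
    · filter_upwards with x using hbound x
  have hval : (∫ x : Euc d, K * P * Real.exp (-(ε * ‖x - z₁‖))) = K * P * I := by
    rw [MeasureTheory.integral_const_mul]
    congr 1
    rw [hIdef]
    exact integral_sub_right_eq_self (fun x : Euc d => Real.exp (-(ε * ‖x‖))) z₁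
  rw [hval] at hmono
  calc (∫ x, |Q (x - z₁)| ^ (2:ℝ) * |Q (x - z₂)| ^ (p - 1)) ≤ K * P * I := hmono
    _ = (K * I) * P := by ring
    _ ≤ (K * I + 1) * P := by nlinarith
end
end

section
/- Let d ≥ 1, c > 0, C > 0, and let F : (0,∞) → ℝ be continuously differentiable with |F(r) − c r^{−(d−1)/2} e^{−r}| + |F'(r) + c r^{−(d−1)/2} e^{−r}| ≤ C r^{−(d+1)/2} e^{−r} for all r ≥ 1. Then there exist R₀ ≥ 1 and K ≥ 1 such that for all r, r' with R₀ ≤ r < r': K^{−1} F(r')(r' − r) ≤ F(r) − F(r') ≤ K F(r)(r' − r). -/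
noncomputable section

/-- Two-sided estimate (Fesb) for the decrement of the interaction coefficient:
if `F(r) ≈ c r^{−(d−1)/2} e^{−r}` and `F'(r) ≈ −c r^{−(d−1)/2} e^{−r}` with
error `O(r^{−(d+1)/2} e^{−r})`, then for all large `r < r'`,
`F(r')(r'−r) ≲ F(r) − F(r') ≲ F(r)(r'−r)`. -/
theorem statement18
    (d : ℕ) (hd : 1 ≤ d) (c C : ℝ) (hc : 0 < c) (hC : 0 < C)
    (F : ℝ → ℝ) (hreg : ContDiffOn ℝ 1 F (Set.Ioi 0))
    (hasym : ∀ r : ℝ, 1 ≤ r →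
      |F r - c * r ^ (-(((d : ℝ) - 1) / 2)) * Real.exp (-r)|
        + |deriv F r + c * r ^ (-(((d : ℝ) - 1) / 2)) * Real.exp (-r)|
        ≤ C * r ^ (-(((d : ℝ) + 1) / 2)) * Real.exp (-r)) :
    ∃ R₀ : ℝ, 1 ≤ R₀ ∧ ∃ K : ℝ, 1 ≤ K ∧ ∀ r r' : ℝ, R₀ ≤ r → r < r' →
      K⁻¹ * (F r' * (r' - r)) ≤ F r - F r' ∧
      F r - F r' ≤ K * (F r * (r' - r)) := by
  have hd1 : (1:ℝ) ≤ (d:ℝ) := by exact_mod_cast hd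
  set a : ℝ := ((d : ℝ) - 1) / 2 with ha_def
  have ha0 : 0 ≤ a := by rw [ha_def]; linarith
  set G : ℝ → ℝ := fun r => c * r ^ (-a) * Real.exp (-r) with hG_def
  have hGpos : ∀ r : ℝ, 0 < r → 0 < G r := by
    intro r hr
    have := Real.rpow_pos_of_pos hr (-a)
    have := Real.exp_pos (-r)
    simp only [hG_def]
    positivity
  have hGanti : ∀ s s' : ℝ, 1 ≤ s → s ≤ s' → G s' ≤ G s := by
    intro s s' hs hss
    have h0 : (0:ℝ) < s := lt_of_lt_of_le one_pos hs
    have h1 : s' ^ (-a) ≤ s ^ (-a) :=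
      Real.rpow_le_rpow_of_nonpos h0 hss (neg_nonpos.mpr ha0)
    have h2 : Real.exp (-s') ≤ Real.exp (-s) := Real.exp_le_exp.mpr (by linarith)
    have h3 : 0 < s' ^ (-a) := Real.rpow_pos_of_pos (lt_of_lt_of_le h0 hss) (-a)
    have h4 : 0 < Real.exp (-s') := Real.exp_pos _
    simp only [hG_def]
    exact mul_le_mul (mul_le_mul_of_nonneg_left h1 hc.le) h2 h4.le (by positivity)
  set R₀ : ℝ := max 1 (2 * C / c) with hR₀_def
  have hR₀1 : (1:ℝ) ≤ R₀ := le_max_left _ _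
  -- key pointwise bounds
  have key : ∀ r : ℝ, R₀ ≤ r →
      G r / 2 ≤ F r ∧ F r ≤ 3 * G r / 2 ∧
      G r / 2 ≤ -(deriv F r) ∧ -(deriv F r) ≤ 3 * G r / 2 := by
    intro r hr
    have hr1 : (1:ℝ) ≤ r := le_trans hR₀1 hr
    have hr0 : (0:ℝ) < r := lt_of_lt_of_le one_pos hr1
    have hrC : 2 * C / c ≤ r := le_trans (le_max_right _ _) hr
    have hCr : C * r⁻¹ ≤ c / 2 := by
      rw [div_le_iff₀ hc] at hrC
      rw [mul_inv_le_iff₀ hr0]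
      nlinarith
    have hexp : -(((d : ℝ) + 1) / 2) = -a + (-1) := by rw [ha_def]; ring
    have hsplit : r ^ (-(((d : ℝ) + 1) / 2)) = r ^ (-a) * r⁻¹ := by
      rw [hexp, Real.rpow_add hr0, Real.rpow_neg_one]
    have hE : C * r ^ (-(((d : ℝ) + 1) / 2)) * Real.exp (-r) ≤ G r / 2 := by
      rw [hsplit]
      have h3 : 0 < r ^ (-a) := Real.rpow_pos_of_pos hr0 (-a)
      have h4 : 0 < Real.exp (-r) := Real.exp_pos _
      simp only [hG_def]
      nlinarith [mul_pos h3 h4, mul_le_mul_of_nonneg_right hCr (le_of_lt (mul_pos h3 h4))]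
    simp only [hG_def] at hE
    have h := hasym r hr1
    have h1 : |F r - G r| ≤ G r / 2 := by
      have := abs_nonneg (deriv F r + c * r ^ (-a) * Real.exp (-r))
      simp only [hG_def]
      linarith
    have h2 : |deriv F r + G r| ≤ G r / 2 := by
      have := abs_nonneg (F r - c * r ^ (-a) * Real.exp (-r))
      simp only [hG_def]
      linarith
    rw [abs_le] at h1 h2
    refine ⟨by linarith [h1.1], by linarith [h1.2], by linarith [h2.2], by linarith [h2.1]⟩
  refine ⟨R₀, hR₀1, 3, by norm_num, ?_⟩
  intro r r' hr hrr'
  have hr1 : (1:ℝ) ≤ r := le_trans hR₀1 hr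
  have hr0 : (0:ℝ) < r := lt_of_lt_of_le one_pos hr1
  have hr'0 : (0:ℝ) < r' := lt_trans hr0 hrr'
  have hsub : Set.Icc r r' ⊆ Set.Ioi (0:ℝ) := by
    intro x hx
    exact lt_of_lt_of_le hr0 hx.1
  have hcont : ContinuousOn F (Set.Icc r r') := (hreg.continuousOn).mono hsub
  have hderiv : ∀ x ∈ Set.Ioo r r', HasDerivAt F (deriv F x) x := by
    intro x hx
    have hx0 : x ∈ Set.Ioi (0:ℝ) := lt_trans hr0 hx.1
    have : DifferentiableAt ℝ F x :=
      (hreg.differentiableOn one_ne_zero).differentiableAt (isOpen_Ioi.mem_nhds hx0)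
    exact this.hasDerivAt
  obtain ⟨ξ, hξ, hslope⟩ := exists_hasDerivAt_eq_slope F (deriv F) hrr' hcont hderiv
  have hξR : R₀ ≤ ξ := le_of_lt (lt_of_le_of_lt hr hξ.1)
  have hdiffpos : (0:ℝ) < r' - r := by linarith
  have heq : F r - F r' = (-(deriv F ξ)) * (r' - r) := by
    rw [hslope]
    field_simp
    ring
  obtain ⟨hFr1, hFr2, _, _⟩ := key r hr
  obtain ⟨hFr'1, hFr'2, _, _⟩ := key r' (le_trans hr (le_of_lt hrr'))
  obtain ⟨_, _, hdξ1, hdξ2⟩ := key ξ hξR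
  have hGξr' : G r' ≤ G ξ := hGanti ξ r' (le_trans hR₀1 hξR) (le_of_lt hξ.2)
  have hGrξ : G ξ ≤ G r := hGanti r ξ hr1 (le_of_lt hξ.1)
  constructor
  · rw [heq]
    have : F r' / 3 ≤ -(deriv F ξ) := by linarith
    nlinarith
  · rw [heq]
    have : -(deriv F ξ) ≤ 3 * F r := by linarith
    nlinarith

end
end
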